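/- arXiv:1009.2948 — 7 statements merged into one kernel-verified Lean document; each statement's English description precedes it below -/
import Mathlib

section
/- Let D ⊂ ℝⁿ be a bounded domain and p ∈ D. The function f_p : S^{n-1} → ℝ₊, assigning to each unit vector v the length of the connected component of (p + ℝv) ∩ D containing p, is lower-semicontinuous; consequently f_p attains its minimum on S^{n-1}. -/
open scoped RealInnerProductSpace
open Metric MeasureTheory Topology Filter

/-- For a point `p` and a unit vector `v`, the length of the connected component of
`(p + ℝ v) ∩ D` containing `p`, computed as the Lebesgue measure of the corresponding
set of parameters `t` (its connected component containing `0`). -/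
noncomputable def segLen {n : ℕ} (D : Set (EuclideanSpace ℝ (Fin n)))
    (p v : EuclideanSpace ℝ (Fin n)) : ℝ :=
  (volume (connectedComponentIn {t : ℝ | p + t • v ∈ D} 0)).toReal

/-- A lower semicontinuous function on a compact closed nonempty set attains its minimum. -/
lemma lsc_exists_min {X : Type*} [TopologicalSpace X] [T2Space X] {s : Set X}
    (hs : IsCompact s) (hcl : IsClosed s) (hne : s.Nonempty) {f : X → ℝ}
    (hf : LowerSemicontinuousOn f s) : ∃ v ∈ s, ∀ w ∈ s, f v ≤ f w := by
  set A : ℝ → Set X := fun c => {x ∈ s | f x ≤ c} with hA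
  have hAcl : ∀ c, IsClosed (A c) := by
    intro c
    apply isClosed_of_closure_subset
    intro x hx
    have hxs : x ∈ s := hcl.closure_subset (closure_mono (fun y hy => hy.1) hx)
    refine ⟨hxs, ?_⟩
    by_contra hlt
    push_neg at hlt
    have h1 : ∀ᶠ y in 𝓝[s] x, c < f y := hf x hxs c hlt
    have hnb : (𝓝[A c] x).NeBot := mem_closure_iff_nhdsWithin_neBot.1 hx
    have h2 : ∀ᶠ y in 𝓝[A c] x, c < f y :=
      h1.filter_mono (nhdsWithin_mono x (fun y hy => hy.1))
    have h3 : ∀ᶠ y in 𝓝[A c] x, f y ≤ c :=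
      eventually_nhdsWithin_of_forall (fun y hy => hy.2)
    obtain ⟨y, hy1, hy2⟩ := (h2.and h3).exists
    exact absurd (hy1.trans_le hy2) (lt_irrefl c)
  have hAcp : ∀ c, IsCompact (A c) :=
    fun c => hs.of_isClosed_subset (hAcl c) (fun x hx => hx.1)
  haveI : Nonempty s := hne.to_subtype
  have hdir : Directed (· ⊇ ·) (fun v : s => A (f v)) := by
    intro u v
    rcases le_total (f u) (f v) with h | h
    · exact ⟨u, Set.Subset.rfl, fun x hx => ⟨hx.1, hx.2.trans h⟩⟩
    · exact ⟨v, fun x hx => ⟨hx.1, hx.2.trans h⟩, Set.Subset.rfl⟩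
  obtain ⟨x, hx⟩ := IsCompact.nonempty_iInter_of_directed_nonempty_isCompact_isClosed
    (fun v : s => A (f v)) hdir (fun v => ⟨v, v.2, le_rfl⟩) (fun v => hAcp _) (fun v => hAcl _)
  simp only [Set.mem_iInter] at hx
  obtain ⟨v0, hv0⟩ := hne
  exact ⟨x, (hx ⟨v0, hv0⟩).1, fun w hw => (hx ⟨w, hw⟩).2⟩

/-- for a bounded domain `D ⊂ ℝⁿ` and `p ∈ D`, the function
`f_p : S^{n-1} → ℝ` is lower semicontinuous, and consequently it attains its
minimum on the sphere. -/
theorem lowerSemicontinuousOn_f_and_min {n : ℕ} (hn : 0 < n)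
    (D : Set (EuclideanSpace ℝ (Fin n)))
    (hOpen : IsOpen D) (hNe : D.Nonempty) (hBdd : Bornology.IsBounded D)
    (p : EuclideanSpace ℝ (Fin n)) (hp : p ∈ D) :
    LowerSemicontinuousOn (segLen D p) (sphere (0 : EuclideanSpace ℝ (Fin n)) 1) ∧
    ∃ v ∈ sphere (0 : EuclideanSpace ℝ (Fin n)) 1,
      ∀ w ∈ sphere (0 : EuclideanSpace ℝ (Fin n)) 1, segLen D p v ≤ segLen D p w := by
  obtain ⟨R, hR⟩ := hBdd.subset_closedBall 0
  let E := EuclideanSpace ℝ (Fin n)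
  have hcont : ∀ w : EuclideanSpace ℝ (Fin n),
      Continuous (fun t : ℝ => p + t • w) :=
    fun w => continuous_const.add (continuous_id.smul continuous_const)
  set S : EuclideanSpace ℝ (Fin n) → Set ℝ :=
    fun w => {t : ℝ | p + t • w ∈ D} with hS
  -- the parameter sets are uniformly bounded for unit vectors
  have hbound : ∀ w ∈ sphere (0 : E) 1, S w ⊆ Set.Icc (-(R + ‖p‖)) (R + ‖p‖) := by
    intro w hw t ht
    have hnw : ‖w‖ = 1 := by simpa using hw
    have h1 : ‖p + t • w‖ ≤ R := by simpa using hR ht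
    have h2 : |t| = ‖t • w‖ := by rw [norm_smul, hnw, mul_one]; rfl
    have h3 : ‖t • w‖ ≤ ‖p + t • w‖ + ‖p‖ := by
      have := norm_sub_le (p + t • w) p
      simpa using this
    have : |t| ≤ R + ‖p‖ := by
      rw [h2]; exact h3.trans (by linarith)
    exact abs_le.1 this
  have hfin : ∀ w ∈ sphere (0 : E) 1, volume (connectedComponentIn (S w) 0) ≠ ⊤ := by
    intro w hw
    have hsub : connectedComponentIn (S w) 0 ⊆ Set.Icc (-(R + ‖p‖)) (R + ‖p‖) :=
      (connectedComponentIn_subset _ _).trans (hbound w hw)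
    exact ne_top_of_le_ne_top (by simp) (measure_mono hsub)
  have hSopen : ∀ w : EuclideanSpace ℝ (Fin n), IsOpen (S w) := by
    intro w
    exact hOpen.preimage (hcont w)
  have h0mem : ∀ w : EuclideanSpace ℝ (Fin n), (0 : ℝ) ∈ S w := by
    intro w; simp [hS, hp]
  -- main LSC statement
  have hlsc : LowerSemicontinuousOn (segLen D p) (sphere (0 : E) 1) := by
    intro v hv c hc
    rcases lt_or_ge c 0 with hc0 | hc0
    · filter_upwards with w using hc0.trans_le ENNReal.toReal_nonneg
    · -- c ≥ 0
      set C := connectedComponentIn (S v) 0 with hC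
      have hCopen : IsOpen C := (hSopen v).connectedComponentIn
      have hC0 : (0 : ℝ) ∈ C := mem_connectedComponentIn (h0mem v)
      have hCfin : volume C ≠ ⊤ := hfin v hv
      have hvolC : ENNReal.ofReal c < volume C := by
        have h1 : c < (volume C).toReal := hc
        rw [← ENNReal.ofReal_toReal hCfin]
        exact (ENNReal.ofReal_lt_ofReal_iff_of_nonneg hc0).2 h1
      obtain ⟨K, hKsub, hKcomp, hKvol⟩ := hCopen.measurableSet.exists_lt_isCompact hvolC
      have hKne : K.Nonempty := by
        by_contra h
        rw [Set.not_nonempty_iff_eq_empty] at h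
        simp [h] at hKvol
      set a : ℝ := min (sInf K) 0 with ha
      set b : ℝ := max (sSup K) 0 with hb
      have ha0 : a ≤ 0 := min_le_right _ _
      have hb0 : 0 ≤ b := le_max_right _ _
      have haC : a ∈ C := by
        rcases min_choice (sInf K) 0 with h | h
        · rw [ha, h]; exact hKsub (hKcomp.sInf_mem hKne)
        · rw [ha, h]; exact hC0
      have hbC : b ∈ C := by
        rcases max_choice (sSup K) 0 with h | h
        · rw [hb, h]; exact hKsub (hKcomp.sSup_mem hKne)
        · rw [hb, h]; exact hC0
      have hIccC : Set.Icc a b ⊆ C :=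
        (isPreconnected_connectedComponentIn.ordConnected).out haC hbC
      have hKIcc : K ⊆ Set.Icc a b := fun t ht =>
        ⟨(min_le_left _ _).trans (csInf_le hKcomp.bddBelow ht),
         (le_csSup hKcomp.bddAbove ht).trans (le_max_left _ _)⟩
      -- tube lemma via thickening
      set Cs : Set (EuclideanSpace ℝ (Fin n)) :=
        (fun t : ℝ => p + t • v) '' Set.Icc a b with hCs
      have hCscomp : IsCompact Cs := (isCompact_Icc).image (hcont v)
      have hCssub : Cs ⊆ D := by
        rintro _ ⟨t, ht, rfl⟩
        exact connectedComponentIn_subset (S v) 0 (hIccC ht)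
      obtain ⟨δ, hδ, hthick⟩ := hCscomp.exists_thickening_subset_open hOpen hCssub
      set M : ℝ := max |a| |b| with hM
      have hM0 : 0 ≤ M := le_trans (abs_nonneg a) (le_max_left _ _)
      set ε : ℝ := δ / (M + 1) with hε
      have hεpos : 0 < ε := div_pos hδ (by linarith)
      have hMε : (M + 1) * ε = δ := by
        rw [hε]; field_simp
      filter_upwards [mem_nhdsWithin_of_mem_nhds (Metric.ball_mem_nhds v hεpos),
        self_mem_nhdsWithin] with w hwball hwsph
      -- the segment parameters are in S w
      have hIccSw : Set.Icc a b ⊆ S w := by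
        intro t ht
        apply hthick
        rw [Metric.mem_thickening_iff]
        refine ⟨p + t • v, ⟨t, ht, rfl⟩, ?_⟩
        have habs : |t| ≤ M := by
          refine abs_le.2 ⟨?_, ?_⟩
          · have : -M ≤ -|a| := neg_le_neg (le_max_left _ _)
            have h2 : -|a| ≤ a := neg_abs_le a
            linarith [ht.1]
          · exact ht.2.trans ((le_abs_self b).trans (le_max_right _ _))
        have hdist : dist (p + t • w) (p + t • v) = |t| * ‖w - v‖ := by
          rw [dist_add_left, dist_eq_norm, ← smul_sub, norm_smul]
          rfl
        rw [hdist]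
        have hwv : ‖w - v‖ < ε := by
          rw [← dist_eq_norm]; exact mem_ball.mp hwball
        calc |t| * ‖w - v‖ < (M + 1) * ε :=
              mul_lt_mul'' (habs.trans_lt (by linarith)) hwv (abs_nonneg t) (norm_nonneg _)
          _ = δ := hMε
      have hIccCw : Set.Icc a b ⊆ connectedComponentIn (S w) 0 :=
        isPreconnected_Icc.subset_connectedComponentIn ⟨ha0, hb0⟩ hIccSw
      have hvolw : ENNReal.ofReal c < volume (connectedComponentIn (S w) 0) :=
        hKvol.trans_le ((measure_mono (hKIcc.trans hIccCw)))
      have hfinw : volume (connectedComponentIn (S w) 0) ≠ ⊤ := hfin w hwsph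
      have : (ENNReal.ofReal c).toReal < (volume (connectedComponentIn (S w) 0)).toReal :=
        (ENNReal.toReal_lt_toReal ENNReal.ofReal_ne_top hfinw).2 hvolw
      rwa [ENNReal.toReal_ofReal hc0] at this
  refine ⟨hlsc, ?_⟩
  have hsphne : (sphere (0 : E) 1).Nonempty := by
    refine ⟨EuclideanSpace.single ⟨0, hn⟩ (1 : ℝ), ?_⟩
    rw [mem_sphere_zero_iff_norm, EuclideanSpace.norm_single, norm_one]
  exact lsc_exists_min (isCompact_sphere 0 1) isClosed_sphere hsphne hlsc
end

section
/- Let D ⊂ ℝⁿ be a bounded domain which is moreover convex. Then the function H : D × S^{n-1} → ℝ defined by H(p,v) = f_p(v) is continuous. -/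
open scoped RealInnerProductSpace
open Metric MeasureTheory Set

namespace SegLenAux

variable {n : ℕ}

/-- The set of parameters. -/
def S (D : Set (EuclideanSpace ℝ (Fin n))) (p v : EuclideanSpace ℝ (Fin n)) : Set ℝ :=
  {t : ℝ | p + t • v ∈ D}

variable {D : Set (EuclideanSpace ℝ (Fin n))} {p v : EuclideanSpace ℝ (Fin n)}

lemma continuous_line (p v : EuclideanSpace ℝ (Fin n)) :
    Continuous (fun t : ℝ => p + t • v) := by continuity

lemma isOpen_S (hOpen : IsOpen D) : IsOpen (S D p v) :=
  hOpen.preimage (continuous_line p v)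

lemma convex_S (hConv : Convex ℝ D) : Convex ℝ (S D p v) := by
  intro x hx y hy a b ha hb hab
  have h := hConv hx hy ha hb hab
  have key : a • (p + x • v) + b • (p + y • v) = p + (a • x + b • y) • v := by
    have h1 : a • (p + x • v) + b • (p + y • v) = (a + b) • p + (a * x + b * y) • v := by
      module
    rw [h1, hab, one_smul]
    norm_num [smul_eq_mul]
  rw [key] at h
  exact h

lemma mem_zero_S (hp : p ∈ D) : (0 : ℝ) ∈ S D p v := by
  simp [S, hp]

lemma bddAbove_S (hBdd : Bornology.IsBounded D) (hv : ‖v‖ = 1) : BddAbove (S D p v) := by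
  obtain ⟨r, hr⟩ := hBdd.subset_closedBall p
  refine ⟨r, fun t ht => ?_⟩
  have := hr ht
  rw [mem_closedBall, dist_eq_norm] at this
  simp only [add_sub_cancel_left, norm_smul, hv, mul_one, Real.norm_eq_abs] at this
  exact (le_abs_self t).trans this

lemma bddBelow_S (hBdd : Bornology.IsBounded D) (hv : ‖v‖ = 1) : BddBelow (S D p v) := by
  obtain ⟨r, hr⟩ := hBdd.subset_closedBall p
  refine ⟨-r, fun t ht => ?_⟩
  have := hr ht
  rw [mem_closedBall, dist_eq_norm] at this
  simp only [add_sub_cancel_left, norm_smul, hv, mul_one, Real.norm_eq_abs] at this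
  linarith [neg_abs_le t]

lemma sSup_S_pos (hOpen : IsOpen D) (hBdd : Bornology.IsBounded D) (hp : p ∈ D)
    (hv : ‖v‖ = 1) : 0 < sSup (S D p v) := by
  obtain ⟨ε, hε, hball⟩ := Metric.isOpen_iff.1 (isOpen_S hOpen) 0 (mem_zero_S hp)
  have hmem : ε / 2 ∈ S D p v := by
    apply hball
    rw [mem_ball, Real.dist_eq, sub_zero, abs_of_pos (by positivity)]
    linarith
  have := le_csSup (bddAbove_S hBdd hv) hmem
  linarith

lemma mem_S_of_nonneg_lt {t : ℝ} (hConv : Convex ℝ D) (hp : p ∈ D) (ht0 : 0 ≤ t)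
    (ht : t < sSup (S D p v)) : t ∈ S D p v := by
  obtain ⟨s, hs, hts⟩ := exists_lt_of_lt_csSup ⟨0, mem_zero_S hp⟩ ht
  exact (convex_S hConv).ordConnected.out (mem_zero_S hp) hs ⟨ht0, hts.le⟩

/-- Continuity of the positive intersection parameter. -/
lemma contSup (hOpen : IsOpen D) (hBdd : Bornology.IsBounded D) (hConv : Convex ℝ D) :
    ContinuousOn
      (fun q : EuclideanSpace ℝ (Fin n) × EuclideanSpace ℝ (Fin n) => sSup (S D q.1 q.2))
      (D ×ˢ sphere (0 : EuclideanSpace ℝ (Fin n)) 1) := by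
  rintro ⟨p, v⟩ hpv
  rw [Set.mem_prod] at hpv
  obtain ⟨hp, hv⟩ := hpv
  rw [mem_sphere_zero_iff_norm] at hv
  rw [ContinuousWithinAt, tendsto_order]
  constructor
  · intro c hc
    obtain ⟨t, htS, hct⟩ := exists_lt_of_lt_csSup ⟨0, mem_zero_S hp⟩ hc
    have hopen : IsOpen {q : EuclideanSpace ℝ (Fin n) × EuclideanSpace ℝ (Fin n) |
        q.1 + t • q.2 ∈ D} := hOpen.preimage (by fun_prop)
    filter_upwards [nhdsWithin_le_nhds (hopen.mem_nhds htS), self_mem_nhdsWithin] with q hq hqd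
    rw [Set.mem_prod, mem_sphere_zero_iff_norm] at hqd
    exact hct.trans_le (le_csSup (bddAbove_S hBdd hqd.2) hq)
  · intro c hc
    set b := sSup (S D p v) with hb
    have hb0 : 0 < b := sSup_S_pos hOpen hBdd hp hv
    set t := (b + c) / 2 with htdef
    have hbt : b < t := by rw [htdef]; linarith
    have htc : t < c := by rw [htdef]; linarith
    have ht0 : 0 < t := hb0.trans hbt
    have hnotcl : p + t • v ∉ closure D := by
      intro hcl
      have hseg : p + b • v ∈ interior D := by
        apply hConv.openSegment_interior_closure_subset_interior
          (x := p) (y := p + t • v) (by rwa [hOpen.interior_eq]) hcl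
        refine ⟨1 - b / t, b / t, ?_, div_pos hb0 ht0, by ring, ?_⟩
        · rw [sub_pos]
          exact (div_lt_one ht0).2 hbt
        · have h1 : (1 - b / t) • p + (b / t) • (p + t • v) = p + ((b / t) * t) • v := by
            module
          rw [h1, div_mul_cancel₀ b ht0.ne']
      rw [hOpen.interior_eq] at hseg
      obtain ⟨ε, hε, hball⟩ := Metric.isOpen_iff.1 (isOpen_S hOpen) b hseg
      have hmem : b + ε / 2 ∈ S D p v := by
        apply hball
        rw [mem_ball, Real.dist_eq, add_sub_cancel_left, abs_of_pos (by positivity)]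
        linarith
      have := le_csSup (bddAbove_S hBdd hv) hmem
      linarith
    have hopenC : IsOpen {q : EuclideanSpace ℝ (Fin n) × EuclideanSpace ℝ (Fin n) |
        q.1 + t • q.2 ∉ closure D} := isClosed_closure.isOpen_compl.preimage (by fun_prop)
    filter_upwards [nhdsWithin_le_nhds (hopenC.mem_nhds hnotcl), self_mem_nhdsWithin] with q hq hqd
    rw [Set.mem_prod, mem_sphere_zero_iff_norm] at hqd
    by_contra h
    push_neg at h
    have htmem : t ∈ S D q.1 q.2 :=
      mem_S_of_nonneg_lt hConv hqd.1 ht0.le (htc.trans_le h)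
    exact hq (subset_closure htmem)

lemma S_eq_Ioo (hOpen : IsOpen D) (hBdd : Bornology.IsBounded D) (hConv : Convex ℝ D)
    (hp : p ∈ D) (hv : ‖v‖ = 1) :
    S D p v = Ioo (sInf (S D p v)) (sSup (S D p v)) := by
  ext t
  constructor
  · intro ht
    obtain ⟨ε, hε, hball⟩ := Metric.isOpen_iff.1 (isOpen_S hOpen) t ht
    have h1 : t - ε / 2 ∈ S D p v := by
      apply hball
      rw [mem_ball, Real.dist_eq, sub_sub_cancel_left, abs_neg, abs_of_pos (by positivity)]
      linarith
    have h2 : t + ε / 2 ∈ S D p v := by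
      apply hball
      rw [mem_ball, Real.dist_eq, add_sub_cancel_left, abs_of_pos (by positivity)]
      linarith
    constructor
    · have := csInf_le (bddBelow_S hBdd hv) h1; linarith
    · have := le_csSup (bddAbove_S hBdd hv) h2; linarith
  · rintro ⟨h1, h2⟩
    obtain ⟨s1, hs1, hs1t⟩ := exists_lt_of_csInf_lt ⟨0, mem_zero_S hp⟩ h1
    obtain ⟨s2, hs2, hts2⟩ := exists_lt_of_lt_csSup ⟨0, mem_zero_S hp⟩ h2
    exact (convex_S hConv).ordConnected.out hs1 hs2 ⟨hs1t.le, hts2.le⟩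

lemma segLen_eq (hOpen : IsOpen D) (hBdd : Bornology.IsBounded D) (hConv : Convex ℝ D)
    (hp : p ∈ D) (hv : ‖v‖ = 1) :
    segLen D p v = sSup (S D p v) - sInf (S D p v) := by
  have hpre : IsPreconnected (S D p v) := (convex_S hConv).isPreconnected
  have hcc : connectedComponentIn {t : ℝ | p + t • v ∈ D} 0 = S D p v :=
    hpre.connectedComponentIn (mem_zero_S hp)
  rw [segLen, hcc]
  conv_lhs => rw [S_eq_Ioo hOpen hBdd hConv hp hv]
  rw [Real.volume_Ioo, ENNReal.toReal_ofReal]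
  have h1 := csInf_le (bddBelow_S hBdd hv) (mem_zero_S (v := v) hp)
  have h2 := le_csSup (bddAbove_S hBdd hv) (mem_zero_S (v := v) hp)
  linarith

lemma neg_S : -S D p v = S D p (-v) := by
  ext t
  simp only [Set.mem_neg, S, Set.mem_setOf_eq, smul_neg, ← neg_smul]

lemma sInf_S_eq : sInf (S D p v) = -sSup (S D p (-v)) := by
  rw [Real.sInf_def, neg_S]

end SegLenAux

set_option maxHeartbeats 1000000 in
/-- for a bounded *convex* domain `D ⊂ ℝⁿ`, the function
`H(p, v) = f_p(v)` is continuous on `D × S^{n-1}`. -/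
theorem continuousOn_H_of_convex {n : ℕ} (D : Set (EuclideanSpace ℝ (Fin n)))
    (hOpen : IsOpen D) (hNe : D.Nonempty) (hBdd : Bornology.IsBounded D)
    (hConv : Convex ℝ D) :
    ContinuousOn
      (fun q : EuclideanSpace ℝ (Fin n) × EuclideanSpace ℝ (Fin n) => segLen D q.1 q.2)
      (D ×ˢ sphere (0 : EuclideanSpace ℝ (Fin n)) 1) := by
  classical
  have key := SegLenAux.contSup (D := D) hOpen hBdd hConv
  have hmap : Set.MapsTo (fun q : EuclideanSpace ℝ (Fin n) × EuclideanSpace ℝ (Fin n) =>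
      (q.1, -q.2)) (D ×ˢ sphere (0 : EuclideanSpace ℝ (Fin n)) 1)
      (D ×ˢ sphere (0 : EuclideanSpace ℝ (Fin n)) 1) := by
    rintro ⟨p, v⟩ hpv
    rw [Set.mem_prod] at hpv ⊢
    refine ⟨hpv.1, ?_⟩
    simpa [mem_sphere_zero_iff_norm] using hpv.2
  have key2 : ContinuousOn
      (fun q : EuclideanSpace ℝ (Fin n) × EuclideanSpace ℝ (Fin n) =>
        sSup (SegLenAux.S D q.1 (-q.2)))
      (D ×ˢ sphere (0 : EuclideanSpace ℝ (Fin n)) 1) :=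
    key.comp (Continuous.continuousOn (continuous_fst.prodMk continuous_snd.neg)) hmap
  apply (key.add key2).congr
  rintro ⟨p, v⟩ hpv
  rw [Set.mem_prod, mem_sphere_zero_iff_norm] at hpv
  show segLen D p v = sSup (SegLenAux.S D p v) + sSup (SegLenAux.S D p (-v))
  rw [SegLenAux.segLen_eq hOpen hBdd hConv hpv.1 hpv.2, SegLenAux.sInf_S_eq]
  ring
end

section
/- Let D ⊂ ℝⁿ be a bounded domain. The inaccessibility function r : closure(D) → ℝ_{≥0}, defined by r(p) = min_{v ∈ S^{n-1}} f_p(v) for p ∈ D and r(p) = 0 for p ∈ ∂D, is lower-semicontinuous on closure(D). -/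
open scoped RealInnerProductSpace
open Metric MeasureTheory
open scoped Classical

/-- Inaccessibility of `p` in `D`: the infimum (a minimum, by lower semicontinuity)
of `f_p` over the unit sphere. -/
noncomputable def inacc {n : ℕ} (D : Set (EuclideanSpace ℝ (Fin n)))
    (p : EuclideanSpace ℝ (Fin n)) : ℝ :=
  sInf (segLen D p '' sphere (0 : EuclideanSpace ℝ (Fin n)) 1)


lemma segLen_nonneg' {n : ℕ} (D : Set (EuclideanSpace ℝ (Fin n)))
    (p v : EuclideanSpace ℝ (Fin n)) : 0 ≤ segLen D p v := ENNReal.toReal_nonneg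

lemma param_subset {n : ℕ} {D : Set (EuclideanSpace ℝ (Fin n))} {R : ℝ}
    (hD : D ⊆ closedBall 0 R) (q w : EuclideanSpace ℝ (Fin n)) (hw : ‖w‖ = 1) :
    {t : ℝ | q + t • w ∈ D} ⊆ Set.Icc (-(R + ‖q‖)) (R + ‖q‖) := by
  intro t ht
  have h1 : ‖q + t • w‖ ≤ R := by simpa [dist_eq_norm] using hD ht
  have h3 : ‖(q + t • w) - q‖ ≤ ‖q + t • w‖ + ‖q‖ := norm_sub_le _ _
  have h4 : (q + t • w) - q = t • w := by abel
  rw [h4, norm_smul, hw, Real.norm_eq_abs, mul_one] at h3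
  exact abs_le.mp (by linarith)

lemma key_lemma {n : ℕ} (D : Set (EuclideanSpace ℝ (Fin n)))
    (hOpen : IsOpen D) {R : ℝ} (hD : D ⊆ closedBall 0 R)
    (p : EuclideanSpace ℝ (Fin n)) (hp : p ∈ D)
    (v : EuclideanSpace ℝ (Fin n)) (hv : ‖v‖ = 1)
    (c : ℝ) (hc : c < segLen D p v) :
    ∃ δ > 0, ∀ q w : EuclideanSpace ℝ (Fin n), ‖w‖ = 1 →
      dist q p < δ → dist w v < δ → c < segLen D q w := by
  set S : Set ℝ := {t : ℝ | p + t • v ∈ D} with hS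
  have hSopen : IsOpen S := hOpen.preimage (continuous_const.add (continuous_id.smul continuous_const))
  have h0S : (0 : ℝ) ∈ S := by simp [hS, hp]
  set C := connectedComponentIn S 0 with hCdef
  have h0C : (0 : ℝ) ∈ C := mem_connectedComponentIn h0S
  have hCopen : IsOpen C := hSopen.connectedComponentIn
  have hCsub : C ⊆ S := connectedComponentIn_subset S 0
  have hCbdd : C ⊆ Set.Icc (-(R + ‖p‖)) (R + ‖p‖) :=
    hCsub.trans (param_subset hD p v hv)
  have hCne : C.Nonempty := ⟨0, h0C⟩
  have hbbelow : BddBelow C := ⟨-(R + ‖p‖), fun x hx => (hCbdd hx).1⟩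
  have hbabove : BddAbove C := ⟨R + ‖p‖, fun x hx => (hCbdd hx).2⟩
  set a := sInf C with ha
  set b := sSup C with hb
  have hord : Set.OrdConnected C :=
    (isPreconnected_connectedComponentIn (x := (0:ℝ)) (F := S)).ordConnected
  have hIooC : Set.Ioo a b ⊆ C := by
    intro x hx
    obtain ⟨y, hyC, hyx⟩ := exists_lt_of_csInf_lt hCne hx.1
    obtain ⟨z, hzC, hxz⟩ := exists_lt_of_lt_csSup hCne hx.2
    exact hord.out hyC hzC ⟨hyx.le, hxz.le⟩
  have hCIcc : C ⊆ Set.Icc a b := fun x hx => ⟨csInf_le hbbelow hx, le_csSup hbabove hx⟩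
  -- a < 0 < b
  obtain ⟨r, hr, hrC⟩ := Metric.isOpen_iff.mp hCopen 0 h0C
  have hrball : Set.Ioo (-(r/2)) (r/2) ⊆ C := by
    intro x hx
    obtain ⟨hx1, hx2⟩ := hx
    apply hrC
    rw [Metric.mem_ball, Real.dist_eq, sub_zero]
    rw [abs_lt]
    constructor <;> linarith
  have ha0 : a < 0 := lt_of_le_of_lt (csInf_le hbbelow (hrball ⟨by linarith, by linarith⟩))
    (by linarith : -(r/4) < 0)
  have hb0 : 0 < b := lt_of_lt_of_le (by linarith : (0:ℝ) < r/4)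
    (le_csSup hbabove (hrball ⟨by linarith, by linarith⟩))
  -- volume C = ofReal (b - a)
  have hvolC : volume C = ENNReal.ofReal (b - a) := by
    apply le_antisymm
    · calc volume C ≤ volume (Set.Icc a b) := measure_mono hCIcc
        _ = ENNReal.ofReal (b - a) := by rw [Real.volume_Icc]
    · calc ENNReal.ofReal (b - a) = volume (Set.Ioo a b) := (Real.volume_Ioo).symm
        _ ≤ volume C := measure_mono hIooC
  have hseg : segLen D p v = b - a := by
    rw [segLen, ← hS, ← hCdef, hvolC, ENNReal.toReal_ofReal (by linarith)]
  rw [hseg] at hc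
  -- choose ε
  set ε := min ((b - a - c)/3) (min (-a) b / 2) with hε
  have hεpos : 0 < ε := by
    apply lt_min (by linarith)
    have : 0 < min (-a) b := lt_min (by linarith) hb0
    linarith
  have hεa : a + ε < 0 := by
    have h1 : ε ≤ min (-a) b / 2 := min_le_right _ _
    have h2 : min (-a) b ≤ -a := min_le_left _ _
    linarith
  have hεb : 0 < b - ε := by
    have h1 : ε ≤ min (-a) b / 2 := min_le_right _ _
    have h2 : min (-a) b ≤ b := min_le_right _ _
    linarith
  have hccompare : c < b - a - 2 * ε := by
    have h1 : ε ≤ (b - a - c)/3 := min_le_left _ _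
    linarith
  -- compact set K
  set I := Set.Icc (a + ε) (b - ε) with hI
  have hIsub : I ⊆ C := fun x hx => hIooC ⟨by linarith [hx.1], by linarith [hx.2]⟩
  set K := (fun t : ℝ => p + t • v) '' I with hK
  have hKcomp : IsCompact K := (isCompact_Icc).image (continuous_const.add (continuous_id.smul continuous_const))
  have hKD : K ⊆ D := by
    rintro _ ⟨t, ht, rfl⟩
    exact hCsub (hIsub ht)
  obtain ⟨δ₀, hδ₀, hthick⟩ := hKcomp.exists_thickening_subset_open hOpen hKD
  set M := max (-(a + ε)) (b - ε) with hM
  have hM0 : 0 ≤ M := le_trans (by linarith) (le_max_right _ _)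
  have habs : ∀ t ∈ I, |t| ≤ M := by
    intro t ht
    rw [abs_le]
    constructor
    · have := le_max_left (-(a+ε)) (b-ε); linarith [ht.1]
    · exact le_trans ht.2 (le_max_right _ _)
  refine ⟨δ₀ / (2 * (M + 1)), by positivity, fun q w hw hq hwv => ?_⟩
  set S' : Set ℝ := {t : ℝ | q + t • w ∈ D} with hS'
  have hIS' : I ⊆ S' := by
    intro t ht
    have hdist : dist (q + t • w) (p + t • v) < δ₀ := by
      rw [dist_eq_norm]
      have heq : (q + t • w) - (p + t • v) = (q - p) + t • (w - v) := by
        rw [smul_sub]; abel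
      rw [heq]
      calc ‖(q - p) + t • (w - v)‖ ≤ ‖q - p‖ + ‖t • (w - v)‖ := norm_add_le _ _
        _ = ‖q - p‖ + |t| * ‖w - v‖ := by rw [norm_smul, Real.norm_eq_abs]
        _ ≤ ‖q - p‖ + M * ‖w - v‖ := by
            have h := habs t ht
            nlinarith [norm_nonneg (w - v), abs_nonneg t]
        _ < δ₀ / (2 * (M + 1)) + M * (δ₀ / (2 * (M + 1))) := by
            rw [← dist_eq_norm, ← dist_eq_norm]
            have h1 : M * dist w v ≤ M * (δ₀ / (2 * (M + 1))) :=
              mul_le_mul_of_nonneg_left hwv.le hM0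
            have h2 : M * dist w v < M * (δ₀ / (2 * (M + 1))) ∨
                M * dist w v = M * (δ₀ / (2 * (M + 1))) := lt_or_eq_of_le h1
            nlinarith [hq, hwv, hM0]
        _ = (M + 1) * (δ₀ / (2 * (M + 1))) := by ring
        _ = δ₀ / 2 := by field_simp
        _ < δ₀ := by linarith
    have : q + t • w ∈ thickening δ₀ K := by
      rw [mem_thickening_iff]
      exact ⟨p + t • v, ⟨t, ht, rfl⟩, hdist⟩
    exact hthick this
  have h0I : (0 : ℝ) ∈ I := ⟨by linarith, by linarith⟩
  have hIcomp : I ⊆ connectedComponentIn S' 0 :=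
    (isPreconnected_Icc).subset_connectedComponentIn h0I hIS'
  have hfin : volume (connectedComponentIn S' 0) ≠ ⊤ := by
    have hsub := (connectedComponentIn_subset S' 0).trans (param_subset hD q w hw)
    exact ((measure_mono hsub).trans_lt measure_Icc_lt_top).ne
  have hvol : ENNReal.ofReal (b - a - 2*ε) ≤ volume (connectedComponentIn S' 0) := by
    calc ENNReal.ofReal (b - a - 2*ε) = volume I := by
          rw [hI, Real.volume_Icc]; ring_nf
      _ ≤ _ := measure_mono hIcomp
  have : b - a - 2*ε ≤ segLen D q w := by
    rw [segLen]
    calc b - a - 2*ε = (ENNReal.ofReal (b - a - 2*ε)).toReal :=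
          (ENNReal.toReal_ofReal (by linarith [segLen_nonneg' D p v, hccompare] :
            (0:ℝ) ≤ b - a - 2*ε)).symm
      _ ≤ _ := ENNReal.toReal_mono hfin hvol
  linarith

lemma inacc_nonneg {n : ℕ} (D : Set (EuclideanSpace ℝ (Fin n)))
    (p : EuclideanSpace ℝ (Fin n)) : 0 ≤ inacc D p :=
  Real.sInf_nonneg (by rintro _ ⟨v, hv, rfl⟩; exact segLen_nonneg' D p v)

/-- for a bounded domain `D ⊂ ℝⁿ`, the inaccessibility function on
`closure D`, given by `r(p) = min_v f_p(v)` for `p ∈ D` and `r(p) = 0` for `p ∈ ∂D`,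
is lower semicontinuous on `closure D`. -/
theorem lowerSemicontinuousOn_inacc_closure {n : ℕ} (D : Set (EuclideanSpace ℝ (Fin n)))
    (hOpen : IsOpen D) (hNe : D.Nonempty) (hBdd : Bornology.IsBounded D) :
    LowerSemicontinuousOn (fun p => if p ∈ D then inacc D p else 0) (closure D) := by
  intro p hp c hc
  simp only at hc ⊢
  by_cases hcneg : c < 0
  · filter_upwards with q
    split
    · exact lt_of_lt_of_le hcneg (inacc_nonneg D q)
    · exact hcneg
  · push_neg at hcneg
    have hpD : p ∈ D := by
      by_contra h
      rw [if_neg h] at hc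
      linarith
    rw [if_pos hpD] at hc
    have hsne : (sphere (0 : EuclideanSpace ℝ (Fin n)) 1).Nonempty := by
      by_contra h
      rw [Set.not_nonempty_iff_eq_empty] at h
      rw [inacc, h, Set.image_empty, Real.sInf_empty] at hc
      linarith
    obtain ⟨R, hR⟩ : ∃ R, D ⊆ closedBall 0 R := hBdd.subset_closedBall 0
    set c' := (c + inacc D p) / 2 with hc'
    have hc'lt : c' < inacc D p := by rw [hc']; linarith
    have hcc' : c < c' := by rw [hc']; linarith
    have hbdd_img : BddBelow (segLen D p '' sphere (0 : EuclideanSpace ℝ (Fin n)) 1) :=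
      ⟨0, by rintro _ ⟨v, hv, rfl⟩; exact segLen_nonneg' D p v⟩
    have hkey : ∀ v ∈ sphere (0 : EuclideanSpace ℝ (Fin n)) 1, ∃ δ > 0,
        ∀ q w : EuclideanSpace ℝ (Fin n), ‖w‖ = 1 →
          dist q p < δ → dist w v < δ → c' < segLen D q w := by
      intro v hv
      have hv1 : ‖v‖ = 1 := by simpa using mem_sphere_zero_iff_norm.mp hv
      exact key_lemma D hOpen hR p hpD v hv1 c'
        (lt_of_lt_of_le hc'lt (csInf_le hbdd_img ⟨v, hv, rfl⟩))
    choose! δ hδpos hδ using hkey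
    have hcsph : IsCompact (sphere (0 : EuclideanSpace ℝ (Fin n)) 1) := isCompact_sphere 0 1
    obtain ⟨t, hcover⟩ := hcsph.elim_nhds_subcover' (fun v hv => ball v (δ v))
      (fun v hv => ball_mem_nhds v (hδpos v hv))
    obtain ⟨v₀, hv₀⟩ := hsne
    have htne : t.Nonempty := by
      rcases Set.mem_iUnion₂.mp (hcover hv₀) with ⟨x, hx, _⟩
      exact ⟨x, hx⟩
    set δmin := t.inf' htne (fun x => δ x.1) with hδmin
    have hδminpos : 0 < δmin := by
      rw [hδmin, Finset.lt_inf'_iff]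
      exact fun x hx => hδpos x.1 x.2
    have hmem : D ∩ ball p δmin ∈ nhdsWithin p (closure D) :=
      mem_nhdsWithin_of_mem_nhds
        (Filter.inter_mem (hOpen.mem_nhds hpD) (ball_mem_nhds p hδminpos))
    filter_upwards [hmem] with q hq
    obtain ⟨hqD, hqball⟩ := hq
    rw [if_pos hqD]
    have : c' ≤ inacc D q := by
      apply le_csInf (Set.Nonempty.image (segLen D q) ⟨v₀, hv₀⟩)
      rintro _ ⟨w, hw, rfl⟩
      rcases Set.mem_iUnion₂.mp (hcover hw) with ⟨x, hxt, hxball⟩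
      have hw1 : ‖w‖ = 1 := by simpa using mem_sphere_zero_iff_norm.mp hw
      have hqdist : dist q p < δ x.1 :=
        lt_of_lt_of_le (mem_ball.mp hqball) (Finset.inf'_le _ hxt)
      exact (hδ x.1 x.2 q w hw1 hqdist (mem_ball.mp hxball)).le
    linarith
end

section
/- Let D ⊂ ℝⁿ be a bounded convex domain, p ∈ D, r = r(p), and let [P,Q] be a segment of length r with P, Q ∈ ∂D and p ∈ [P,Q]. Let v_P and v_Q be supporting unit vectors at P and Q respectively. If v_P and v_Q are parallel, then: v_P = −v_Q; the vector Q − P is parallel to v_P; P and Q are non-corner points (each has a unique supporting unit vector); and r = R, i.e. r(x) ≤ r for every x ∈ D. -/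
open scoped RealInnerProductSpace
open Metric MeasureTheory

/-- `v` is a supporting (unit) vector of `D` at the boundary point `p`: `v` is a unit
vector and `p` lies on the supporting hyperplane `H_v = {x | ⟪x,v⟫ = sup_{y ∈ D} ⟪y,v⟫}`. -/
def IsSupportVec {n : ℕ} (D : Set (EuclideanSpace ℝ (Fin n)))
    (v p : EuclideanSpace ℝ (Fin n)) : Prop :=
  ‖v‖ = 1 ∧ ⟪p, v⟫ = sSup ((fun y : EuclideanSpace ℝ (Fin n) => ⟪y, v⟫) '' D)

section Aux
variable {n : ℕ}

lemma bddAbove_inner_img {D : Set (EuclideanSpace ℝ (Fin n))}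
    (hBdd : Bornology.IsBounded D) (v : EuclideanSpace ℝ (Fin n)) :
    BddAbove ((fun y : EuclideanSpace ℝ (Fin n) => ⟪y, v⟫) '' D) := by
  obtain ⟨C, hC⟩ := isBounded_iff_forall_norm_le.mp hBdd
  refine ⟨C * ‖v‖, ?_⟩
  rintro x ⟨y, hy, rfl⟩
  calc ⟪y, v⟫ ≤ ‖y‖ * ‖v‖ := real_inner_le_norm y v
    _ ≤ C * ‖v‖ := by
      have := hC y hy
      exact mul_le_mul_of_nonneg_right this (norm_nonneg v)

lemma inner_lt_sSup {D : Set (EuclideanSpace ℝ (Fin n))}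
    (hOpen : IsOpen D) (hBdd : Bornology.IsBounded D)
    {v : EuclideanSpace ℝ (Fin n)} (hv : ‖v‖ = 1)
    {x : EuclideanSpace ℝ (Fin n)} (hx : x ∈ D) :
    ⟪x, v⟫ < sSup ((fun y : EuclideanSpace ℝ (Fin n) => ⟪y, v⟫) '' D) := by
  obtain ⟨δ, hδ, hball⟩ := Metric.isOpen_iff.mp hOpen x hx
  have hmem : x + (δ/2) • v ∈ D := by
    apply hball
    rw [mem_ball_iff_norm]
    simp only [add_sub_cancel_left, norm_smul, hv, Real.norm_eq_abs]
    rw [abs_of_pos (by linarith), mul_one]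
    linarith
  have hle : ⟪x + (δ/2) • v, v⟫ ≤ sSup ((fun y : EuclideanSpace ℝ (Fin n) => ⟪y, v⟫) '' D) :=
    le_csSup (bddAbove_inner_img hBdd v) ⟨_, hmem, rfl⟩
  have : ⟪x + (δ/2) • v, v⟫ = ⟪x, v⟫ + δ/2 := by
    rw [inner_add_left, real_inner_smul_left, real_inner_self_eq_norm_sq, hv]
    ring
  rw [this] at hle
  linarith

lemma segLen_le_of_Ioo {D : Set (EuclideanSpace ℝ (Fin n))}
    {p v : EuclideanSpace ℝ (Fin n)} {a b : ℝ} (hab : a ≤ b)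
    (h : ∀ t : ℝ, p + t • v ∈ D → t ∈ Set.Ioo a b) : segLen D p v ≤ b - a := by
  have h1 : connectedComponentIn {t : ℝ | p + t • v ∈ D} 0 ⊆ Set.Ioo a b :=
    (connectedComponentIn_subset _ _).trans h
  have h2 := measure_mono (μ := volume) h1
  rw [Real.volume_Ioo] at h2
  exact ENNReal.toReal_le_of_le_ofReal (by linarith) h2

lemma inacc_le_segLen {D : Set (EuclideanSpace ℝ (Fin n))}
    (p : EuclideanSpace ℝ (Fin n)) {v : EuclideanSpace ℝ (Fin n)} (hv : ‖v‖ = 1) :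
    inacc D p ≤ segLen D p v := by
  apply csInf_le
  · exact ⟨0, by rintro x ⟨u, -, rfl⟩; exact ENNReal.toReal_nonneg⟩
  · exact ⟨v, by simpa using hv, rfl⟩


set_option maxHeartbeats 1000000 in
lemma unique_support_aux {D : Set (EuclideanSpace ℝ (Fin n))}
    {p P v w : EuclideanSpace ℝ (Fin n)} {r s : ℝ}
    (hr : 0 < r) (hs : 0 < s) (hs1 : s < 1)
    (hv : ‖v‖ = 1) (hw : ‖w‖ = 1)
    (hpP : p = P - (s * r) • v)
    (hslab : ∀ x ∈ D, ⟪P, v⟫ - r < ⟪x, v⟫)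
    (hhw : ∀ x ∈ D, ⟪x, w⟫ < ⟪P, w⟫)
    (hchord : ∀ u : EuclideanSpace ℝ (Fin n), ‖u‖ = 1 → r ≤ segLen D p u)
    (hpD : p ∈ D) : w = v := by
  have hvv : ⟪v, v⟫ = (1:ℝ) := by rw [real_inner_self_eq_norm_sq, hv]; norm_num
  have hww : ⟪w, w⟫ = (1:ℝ) := by rw [real_inner_self_eq_norm_sq, hw]; norm_num
  obtain ⟨c, hc⟩ : ∃ c : ℝ, ⟪v, w⟫ = c := ⟨_, rfl⟩
  have hc' : ⟪w, v⟫ = c := by rw [real_inner_comm]; exact hc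
  have hpv : ⟪p, v⟫ = ⟪P, v⟫ - s * r := by
    rw [hpP, inner_sub_left, real_inner_smul_left, hvv]; ring
  have hpw : ⟪p, w⟫ = ⟪P, w⟫ - s * r * c := by
    rw [hpP, inner_sub_left, real_inner_smul_left, hc]
  have hc0 : 0 < c := by
    have h1 := hhw p hpD
    rw [hpw] at h1
    nlinarith [mul_pos hs hr]
  have hc1 : c ≤ 1 := by
    have h1 := real_inner_le_norm v w; rw [hv, hw, hc] at h1; simpa using h1
  rcases eq_or_lt_of_le hc1 with hceq | hclt
  · have h1 : ⟪v, w⟫ = ‖v‖ * ‖w‖ := by rw [hv, hw, hc, hceq]; norm_num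
    have h2 := inner_eq_norm_mul_iff_real.mp h1
    rw [hv, hw, one_smul, one_smul] at h2
    exact h2.symm
  · exfalso
    obtain ⟨g, hg0, hg2⟩ : ∃ g : ℝ, 0 < g ∧ g ^ 2 = 1 - c ^ 2 :=
      ⟨Real.sqrt (1 - c ^ 2), Real.sqrt_pos.mpr (by nlinarith),
        Real.sq_sqrt (by nlinarith)⟩
    have hgle1 : g ≤ 1 := by nlinarith [sq_nonneg (g - 1)]
    obtain ⟨e, hve, hew, hee⟩ : ∃ e : EuclideanSpace ℝ (Fin n),
        ⟪v, e⟫ = (0:ℝ) ∧ ⟪e, w⟫ = g ∧ ⟪e, e⟫ = (1:ℝ) := by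
      refine ⟨g⁻¹ • (w - c • v), ?_, ?_, ?_⟩
      · rw [real_inner_smul_right, inner_sub_right, real_inner_smul_right, hvv, hc]; ring
      · rw [real_inner_smul_left, inner_sub_left, real_inner_smul_left, hww, hc]
        have h1 : (1:ℝ) - c * c = g ^ 2 := by nlinarith
        rw [h1]; field_simp
      · rw [real_inner_smul_left, real_inner_smul_right]
        have hq : ⟪w - c • v, w - c • v⟫ = g ^ 2 := by
          simp only [inner_sub_left, inner_sub_right, real_inner_smul_left,
            real_inner_smul_right, hvv, hww, hc, hc']
          linarith [hg2]
        rw [hq]; field_simp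
    obtain ⟨ε, hε⟩ : ∃ ε : ℝ, ε = s * g / 4 := ⟨_, rfl⟩
    have hε0 : 0 < ε := by rw [hε]; positivity
    have hsg : s * g ≤ s := mul_le_of_le_one_right hs.le hgle1
    have hεlt : ε < 1 := by rw [hε]; linarith
    obtain ⟨K, hK0, hK2, hK1⟩ : ∃ K : ℝ, 0 < K ∧ K ^ 2 = 1 + ε ^ 2 ∧ 1 ≤ K :=
      ⟨Real.sqrt (1 + ε ^ 2), Real.sqrt_pos.mpr (by positivity),
        Real.sq_sqrt (by positivity),
        (Real.le_sqrt zero_le_one (by positivity)).mpr (by nlinarith [sq_nonneg ε])⟩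
    have hKle : K ≤ 1 + ε ^ 2 := by nlinarith [mul_le_mul_of_nonneg_left hK1 hK0.le]
    obtain ⟨u, hunorm, huv, huw⟩ : ∃ u : EuclideanSpace ℝ (Fin n),
        ‖u‖ = 1 ∧ ⟪u, v⟫ = K⁻¹ ∧ ⟪u, w⟫ = K⁻¹ * (c + ε * g) := by
      have hve' : ⟪e, v⟫ = (0:ℝ) := by rw [real_inner_comm]; exact hve
      refine ⟨K⁻¹ • (v + ε • e), ?_, ?_, ?_⟩
      · have hxx : ⟪v + ε • e, v + ε • e⟫ = K ^ 2 := by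
          simp only [inner_add_left, inner_add_right, real_inner_smul_left,
            real_inner_smul_right, hvv, hee, hve, hve']
          linarith [hK2]
        have huu : ⟪K⁻¹ • (v + ε • e), K⁻¹ • (v + ε • e)⟫ = (1:ℝ) := by
          rw [real_inner_smul_left, real_inner_smul_right, hxx]
          field_simp
        rw [norm_eq_sqrt_real_inner, huu, Real.sqrt_one]
      · simp only [real_inner_smul_left, inner_add_left, hve', hvv]
        ring
      · simp only [real_inner_smul_left, inner_add_left, hew, hc]
    have hd : 0 < c + ε * g := by positivity
    have hsub : ∀ t : ℝ, p + t • u ∈ D →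
        t ∈ Set.Ioo (-((1 - s) * r * K)) (s * r * c * K / (c + ε * g)) := by
      intro t ht
      constructor
      · have h1 := hslab _ ht
        rw [inner_add_left, real_inner_smul_left, hpv, huv] at h1
        have h2 : (s - 1) * r < t * K⁻¹ := by linarith
        have h3 := mul_lt_mul_of_pos_right h2 hK0
        have h4 : t * K⁻¹ * K = t := by field_simp
        rw [h4] at h3
        linarith
      · have h1 := hhw _ ht
        rw [inner_add_left, real_inner_smul_left, hpw, huw] at h1
        have h2 : t * (K⁻¹ * (c + ε * g)) < s * r * c := by linarith
        have h3 := mul_lt_mul_of_pos_right h2 hK0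
        have h4 : t * (K⁻¹ * (c + ε * g)) * K = t * (c + ε * g) := by
          field_simp
        rw [h4] at h3
        rw [lt_div_iff₀ hd]
        linarith
    have hab : -((1 - s) * r * K) ≤ s * r * c * K / (c + ε * g) := by
      have ha0 : (0:ℝ) < (1 - s) * r * K := mul_pos (mul_pos (by linarith : (0:ℝ) < 1 - s) hr) hK0
      have hb0 : (0:ℝ) < s * r * c * K / (c + ε * g) := by positivity
      linarith
    have hkey : r ≤ s * r * c * K / (c + ε * g) - -((1 - s) * r * K) :=
      le_trans (hchord u hunorm) (segLen_le_of_Ioo hab hsub)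
    have key1 : r * (c + ε * g) ≤ s * r * c * K + (1 - s) * r * K * (c + ε * g) := by
      have h' := mul_le_mul_of_nonneg_right hkey hd.le
      have h'' : (s * r * c * K / (c + ε * g) - -((1 - s) * r * K)) * (c + ε * g)
          = s * r * c * K + (1 - s) * r * K * (c + ε * g) := by
        field_simp; ring
      linarith
    have h3 : r * (c + ε * g) ≤ r * (K * (c + ε * g - s * (ε * g))) := by
      have hq : s * r * c * K + (1 - s) * r * K * (c + ε * g)
          = r * (K * (c + ε * g - s * (ε * g))) := by ring
      linarith
    have key2 : c + ε * g ≤ K * (c + ε * g - s * (ε * g)) := le_of_mul_le_mul_left h3 hr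
    have hpos : 0 ≤ c + ε * g - s * (ε * g) := by
      have h9 : (0:ℝ) ≤ (1 - s) * (ε * g) :=
        mul_nonneg (by linarith) (mul_pos hε0 hg0).le
      nlinarith [h9]
    have key3 : c + ε * g ≤ (1 + ε ^ 2) * (c + ε * g - s * (ε * g)) :=
      key2.trans (mul_le_mul_of_nonneg_right hKle hpos)
    have expand : (1 + ε ^ 2) * (c + ε * g - s * (ε * g))
        = (c + ε * g) + (ε ^ 2 * (c + ε * g) - s * ε * g * (1 + ε ^ 2)) := by ring
    have key4 : s * ε * g * (1 + ε ^ 2) ≤ ε ^ 2 * (c + ε * g) := by linarith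
    have hεg : ε * g ≤ ε := mul_le_of_le_one_right hε0.le hgle1
    have hc2 : c + ε * g < 2 := by linarith
    have h5 : ε ^ 2 * (c + ε * g) < ε ^ 2 * 2 := by
      exact mul_lt_mul_of_pos_left hc2 (pow_pos hε0 2)
    have h6 : ε ^ 2 * 2 = s * ε * g / 2 := by rw [hε]; ring
    have hsεg : 0 < s * ε * g := mul_pos (mul_pos hs hε0) hg0
    have h7 : s * ε * g / 2 < s * ε * g := by linarith
    have h8 : s * ε * g ≤ s * ε * g * (1 + ε ^ 2) :=
      le_mul_of_one_le_right hsεg.le (by linarith [sq_nonneg ε])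
    linarith


end Aux

/-- Let `D ⊂ ℝⁿ` be a bounded convex domain, `p ∈ D`, `r = r(p)`, and
`[P,Q]` a segment of length `r` with `P, Q ∈ ∂D` and `p ∈ [P,Q]`. Let `v_P, v_Q` be
supporting unit vectors at `P, Q`. If `v_P ∥ v_Q`, then `v_P = -v_Q`, `Q - P ∥ v_P`,
`P` and `Q` are non-corner points, and `r = R`, i.e. `r(x) ≤ r` for all `x ∈ D`. -/
theorem parallel_support_case {n : ℕ} (D : Set (EuclideanSpace ℝ (Fin n)))
    (hOpen : IsOpen D) (hNe : D.Nonempty) (hBdd : Bornology.IsBounded D)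
    (hConv : Convex ℝ D)
    (p : EuclideanSpace ℝ (Fin n)) (hp : p ∈ D)
    (P Q : EuclideanSpace ℝ (Fin n)) (hP : P ∈ frontier D) (hQ : Q ∈ frontier D)
    (hlen : dist P Q = inacc D p) (hseg : p ∈ segment ℝ P Q)
    (vP vQ : EuclideanSpace ℝ (Fin n))
    (hvP : IsSupportVec D vP P) (hvQ : IsSupportVec D vQ Q)
    (hpar : vP = vQ ∨ vP = -vQ) :
    vP = -vQ ∧
    (∃ t : ℝ, Q - P = t • vP) ∧
    (∀ w, IsSupportVec D w P → w = vP) ∧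
    (∀ w, IsSupportVec D w Q → w = vQ) ∧
    (∀ x ∈ D, inacc D x ≤ inacc D p) := by
  obtain ⟨hv1, hvPsup⟩ := hvP
  obtain ⟨hv2, hvQsup⟩ := hvQ
  have hPD : P ∉ D := by rw [hOpen.frontier_eq] at hP; exact hP.2
  have hQD : Q ∉ D := by rw [hOpen.frontier_eq] at hQ; exact hQ.2
  have hvv : ⟪vP, vP⟫ = (1:ℝ) := by rw [real_inner_self_eq_norm_sq, hv1]; norm_num
  have hupP : ∀ x ∈ D, ⟪x, vP⟫ < ⟪P, vP⟫ := by
    intro x hx; rw [hvPsup]; exact inner_lt_sSup hOpen hBdd hv1 hx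
  have hupQ : ∀ x ∈ D, ⟪x, vQ⟫ < ⟪Q, vQ⟫ := by
    intro x hx; rw [hvQsup]; exact inner_lt_sSup hOpen hBdd hv2 hx
  obtain ⟨a, b, ha, hb, hab1, hpe⟩ := hseg
  have hpinner : ∀ v : EuclideanSpace ℝ (Fin n), ⟪p, v⟫ = a * ⟪P, v⟫ + b * ⟪Q, v⟫ := by
    intro v
    rw [← hpe, inner_add_left, real_inner_smul_left, real_inner_smul_left]
  -- Step 1 : vP = -vQ
  have hvpq : vP = -vQ := by
    rcases hpar with h | h
    · exfalso
      subst h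
      have hQPeq : ⟪Q, vP⟫ = ⟪P, vP⟫ := hvQsup.trans hvPsup.symm
      have h1 := hpinner vP
      rw [hQPeq] at h1
      have h2 : a * ⟪P, vP⟫ + b * ⟪P, vP⟫ = ⟪P, vP⟫ := by
        rw [← add_mul, hab1, one_mul]
      have h3 := hupP p hp
      linarith
    · exact h
  have hvQP : vQ = -vP := by rw [hvpq]; simp
  have hlow : ∀ x ∈ D, ⟪Q, vP⟫ < ⟪x, vP⟫ := by
    intro x hx
    have h1 := hupQ x hx
    rw [hvQP, inner_neg_right, inner_neg_right] at h1
    linarith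
  have hpvlt : ⟪p, vP⟫ < ⟪P, vP⟫ := hupP p hp
  have hpvgt : ⟪Q, vP⟫ < ⟪p, vP⟫ := hlow p hp
  -- slab width equals dist P Q
  have hWler : ⟪P, vP⟫ - ⟪Q, vP⟫ ≤ dist P Q := by
    have h1 : ⟪P - Q, vP⟫ ≤ ‖P - Q‖ * ‖vP‖ := real_inner_le_norm _ _
    rw [inner_sub_left, hv1, mul_one] at h1
    rwa [dist_eq_norm]
  have hchordIoo : ∀ x ∈ D, ∀ t : ℝ, x + t • vP ∈ D →
      t ∈ Set.Ioo (⟪Q, vP⟫ - ⟪x, vP⟫) (⟪P, vP⟫ - ⟪x, vP⟫) := by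
    intro x hx t ht
    have h1 := hupP _ ht
    have h2 := hlow _ ht
    rw [inner_add_left, real_inner_smul_left, hvv, mul_one] at h1 h2
    exact ⟨by linarith, by linarith⟩
  have hsegle : ∀ x ∈ D, segLen D x vP ≤ ⟪P, vP⟫ - ⟪Q, vP⟫ := by
    intro x hx
    have h1 := hupP x hx
    have h2 := hlow x hx
    have h3 := segLen_le_of_Ioo (by linarith) (hchordIoo x hx)
    linarith
  have hrleW : dist P Q ≤ ⟪P, vP⟫ - ⟪Q, vP⟫ := by
    rw [hlen]
    exact le_trans (inacc_le_segLen p hv1) (hsegle p hp)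
  have hW : ⟪P, vP⟫ - ⟪Q, vP⟫ = dist P Q := le_antisymm hWler hrleW
  -- equality in Cauchy-Schwarz
  have hPQv : P - Q = dist P Q • vP := by
    have h1 : ⟪P - Q, vP⟫ = ‖P - Q‖ * ‖vP‖ := by
      rw [inner_sub_left, hv1, mul_one, ← dist_eq_norm]
      exact hW
    have h2 := inner_eq_norm_mul_iff_real.mp h1
    rw [hv1, one_smul, ← dist_eq_norm] at h2
    exact h2
  have hr0 : 0 < dist P Q := by
    rcases eq_or_ne P Q with rfl | hne
    · exfalso
      have hpeq : p = P := by
        have h1 : a • P + b • P = P := by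
          rw [← add_smul, hab1, one_smul]
        rw [← hpe, h1]
      exact hPD (hpeq ▸ hp)
    · exact dist_pos.mpr hne
  have hb0 : 0 < b := by
    rcases lt_or_eq_of_le hb with h | h
    · exact h
    · exfalso
      have hpeq : p = P := by
        rw [← hpe, ← h]
        have haa : a = 1 := by linarith
        simp [haa]
      exact hPD (hpeq ▸ hp)
  have hb1 : b < 1 := by
    rcases lt_or_eq_of_le (show b ≤ 1 by linarith) with h | h
    · exact h
    · exfalso
      have hpeq : p = Q := by
        rw [← hpe, h]
        have haa : a = 0 := by linarith
        simp [haa]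
      exact hQD (hpeq ▸ hp)
  have haeq : a = 1 - b := by linarith
  subst haeq
  -- p in terms of P and Q
  have hpP : p = P - (b * dist P Q) • vP := by
    rw [← hpe]
    have h1 : (1 - b) • P + b • Q = P - b • (P - Q) := by module
    rw [h1, hPQv, smul_smul]
  have hpQ : p = Q - ((1 - b) * dist P Q) • (-vP) := by
    rw [← hpe]
    have h1 : (1 - b) • P + b • Q = Q + (1 - b) • (P - Q) := by module
    rw [h1, hPQv, smul_smul, smul_neg, sub_neg_eq_add]
  have hchord : ∀ u : EuclideanSpace ℝ (Fin n), ‖u‖ = 1 → dist P Q ≤ segLen D p u := by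
    intro u hu
    rw [hlen]
    exact inacc_le_segLen p hu
  refine ⟨hvpq, ⟨-(dist P Q), by rw [neg_smul, ← hPQv, neg_sub]⟩, ?_, ?_, ?_⟩
  · -- uniqueness at P
    intro w hw
    refine unique_support_aux hr0 hb0 hb1 hv1 hw.1 hpP ?_ ?_ hchord hp
    · intro x hx
      have h1 := hlow x hx
      linarith [hW]
    · intro x hx
      rw [hw.2]
      exact inner_lt_sSup hOpen hBdd hw.1 hx
  · -- uniqueness at Q
    intro w hw
    rw [hvQP]
    refine unique_support_aux hr0 (by linarith) (by linarith) (by rw [norm_neg]; exact hv1)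
      hw.1 hpQ ?_ ?_ hchord hp
    · intro x hx
      have h1 := hupP x hx
      rw [inner_neg_right, inner_neg_right]
      linarith [hW]
    · intro x hx
      rw [hw.2]
      exact inner_lt_sSup hOpen hBdd hw.1 hx
  · -- r = R
    intro x hx
    rw [← hlen]
    refine le_trans (inacc_le_segLen x hv1) ?_
    rw [← hW]
    exact hsegle x hx
end

section
/- Let D ⊂ ℝⁿ be a bounded convex domain. Then the inaccessibility function r attains its supremum R at some point of D; moreover I_D = E_R, and I_D ∩ D = E_R ∩ D = {p ∈ D : r(p) = R}. -/
open scoped RealInnerProductSpace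
open Metric MeasureTheory

/-- `E_r`: the closure of the set of points of `D` with inaccessibility at least `r`. -/
noncomputable def Eset {n : ℕ} (D : Set (EuclideanSpace ℝ (Fin n))) (r : ℝ) :
    Set (EuclideanSpace ℝ (Fin n)) :=
  closure {p | p ∈ D ∧ r ≤ inacc D p}

/-- The inaccessibility `R` of `D`: the supremum of the inaccessibility function. -/
noncomputable def Rmax {n : ℕ} (D : Set (EuclideanSpace ℝ (Fin n))) : ℝ :=
  sSup (inacc D '' D)

/-- `I_D = ⋂_{r < R} E_r`, the set of points of maximum inaccessibility. -/
noncomputable def maxInaccSet {n : ℕ} (D : Set (EuclideanSpace ℝ (Fin n))) :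
    Set (EuclideanSpace ℝ (Fin n)) :=
  ⋂ r ∈ Set.Iio (Rmax D), Eset D r

namespace SegAux

variable {n : ℕ} {D : Set (EuclideanSpace ℝ (Fin n))}

/-- The parameter set of the chord. -/
def chord (D : Set (EuclideanSpace ℝ (Fin n))) (p v : EuclideanSpace ℝ (Fin n)) : Set ℝ :=
  {t : ℝ | p + t • v ∈ D}

lemma chord_convex (hConv : Convex ℝ D) (p v : EuclideanSpace ℝ (Fin n)) :
    Convex ℝ (chord D p v) := by
  intro s hs t ht a b ha hb hab
  have h := hConv hs ht ha hb hab
  have : a • (p + s • v) + b • (p + t • v) = p + (a * s + b * t) • v := by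
    have : a • (p + s • v) + b • (p + t • v) = (a + b) • p + (a * s + b * t) • v := by module
    rw [this, hab, one_smul]
  show p + (a * s + b * t) • v ∈ D
  rw [← this]; exact h

lemma chord_isOpen (hOpen : IsOpen D) (p v : EuclideanSpace ℝ (Fin n)) :
    IsOpen (chord D p v) :=
  hOpen.preimage (by continuity)

lemma chord_subset_Icc (hBdd : Bornology.IsBounded D) {p v : EuclideanSpace ℝ (Fin n)}
    (hp : p ∈ D) (hv : ‖v‖ = 1) :
    ∃ M : ℝ, 0 < M ∧ chord D p v ⊆ Set.Icc (-M) M := by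
  obtain ⟨C, hC⟩ := hBdd.subset_ball (0 : EuclideanSpace ℝ (Fin n))
  refine ⟨‖p‖ + |C| + 1, by positivity, fun t ht => ?_⟩
  have h1 : ‖p + t • v‖ < C := by simpa using hC ht
  have h2 : |t| = ‖t • v‖ := by rw [norm_smul, hv, mul_one, Real.norm_eq_abs]
  have h3 : ‖t • v‖ ≤ ‖p + t • v‖ + ‖p‖ := by
    have := norm_sub_le (p + t • v) p
    simpa using this
  have : |t| ≤ ‖p‖ + |C| := by
    have : C ≤ |C| := le_abs_self C
    linarith
  constructor <;> [skip; skip] <;> cases' abs_le.mp this with hl hr <;> linarith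

lemma zero_mem_chord {p v : EuclideanSpace ℝ (Fin n)} (hp : p ∈ D) : (0 : ℝ) ∈ chord D p v := by
  simp [chord, hp]


lemma chord_bdd (hBdd : Bornology.IsBounded D) {p v : EuclideanSpace ℝ (Fin n)}
    (hp : p ∈ D) (hv : ‖v‖ = 1) :
    BddBelow (chord D p v) ∧ BddAbove (chord D p v) := by
  obtain ⟨M, _, hM⟩ := chord_subset_Icc hBdd hp hv
  exact ⟨⟨-M, fun t ht => (hM ht).1⟩, ⟨M, fun t ht => (hM ht).2⟩⟩

lemma chord_ball (hOpen : IsOpen D) {p v : EuclideanSpace ℝ (Fin n)}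
    (hp : p ∈ D) (hv : ‖v‖ = 1) :
    ∃ ε > 0, ∀ t : ℝ, |t| < ε → t ∈ chord D p v := by
  obtain ⟨ε, hε, hball⟩ := Metric.isOpen_iff.mp hOpen p hp
  refine ⟨ε, hε, fun t ht => ?_⟩
  apply hball
  simp only [Metric.mem_ball, dist_eq_norm]
  have : p + t • v - p = t • v := by abel
  rw [this, norm_smul, hv, mul_one, Real.norm_eq_abs]
  exact ht

lemma Ioo_subset_chord (hConv : Convex ℝ D) {p v : EuclideanSpace ℝ (Fin n)}
    (hp : p ∈ D) :
    Set.Ioo (sInf (chord D p v)) (sSup (chord D p v)) ⊆ chord D p v := by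
  intro x hx
  obtain ⟨s, hs, hsx⟩ := exists_lt_of_csInf_lt ⟨0, zero_mem_chord hp⟩ hx.1
  obtain ⟨t, ht, hxt⟩ := exists_lt_of_lt_csSup ⟨0, zero_mem_chord hp⟩ hx.2
  exact (chord_convex hConv p v).ordConnected.out hs ht ⟨hsx.le, hxt.le⟩

lemma sInf_chord_neg (hOpen : IsOpen D) (hBdd : Bornology.IsBounded D)
    {p v : EuclideanSpace ℝ (Fin n)} (hp : p ∈ D) (hv : ‖v‖ = 1) :
    sInf (chord D p v) < 0 ∧ 0 < sSup (chord D p v) := by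
  obtain ⟨ε, hε, hball⟩ := chord_ball hOpen hp hv
  obtain ⟨hbb, hba⟩ := chord_bdd hBdd hp hv
  have h1 : sInf (chord D p v) ≤ -(ε/2) :=
    csInf_le hbb (hball _ (by rw [abs_neg, abs_of_pos (by linarith)]; linarith))
  have h2 : ε/2 ≤ sSup (chord D p v) :=
    le_csSup hba (hball _ (by rw [abs_of_pos (by linarith)]; linarith))
  constructor <;> linarith

/-- The key formula for `segLen`. -/
lemma segLen_eq (hOpen : IsOpen D) (hBdd : Bornology.IsBounded D) (hConv : Convex ℝ D)
    {p v : EuclideanSpace ℝ (Fin n)} (hp : p ∈ D) (hv : ‖v‖ = 1) :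
    segLen D p v = sSup (chord D p v) - sInf (chord D p v) := by
  have hcc : connectedComponentIn {t : ℝ | p + t • v ∈ D} 0 = chord D p v := by
    have hpre : IsPreconnected (chord D p v) :=
      Real.convex_iff_isPreconnected.mp (chord_convex hConv p v)
    exact hpre.connectedComponentIn (zero_mem_chord hp)
  obtain ⟨hbb, hba⟩ := chord_bdd hBdd hp hv
  obtain ⟨hia, hib⟩ := sInf_chord_neg hOpen hBdd hp hv
  set a := sInf (chord D p v)
  set b := sSup (chord D p v)
  have hsub1 : Set.Ioo a b ⊆ chord D p v := Ioo_subset_chord hConv hp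
  have hsub2 : chord D p v ⊆ Set.Icc a b := fun t ht => ⟨csInf_le hbb ht, le_csSup hba ht⟩
  have hab : a ≤ b := by linarith
  have h1 : volume (Set.Ioo a b) ≤ volume (chord D p v) := measure_mono hsub1
  have h2 : volume (chord D p v) ≤ volume (Set.Icc a b) := measure_mono hsub2
  rw [Real.volume_Ioo] at h1
  rw [Real.volume_Icc] at h2
  have hv2 : volume (chord D p v) = ENNReal.ofReal (b - a) := le_antisymm h2 h1
  rw [segLen, hcc]
  show (volume (chord D p v)).toReal = b - a
  rw [hv2, ENNReal.toReal_ofReal (by linarith)]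

lemma segLen_nonneg (p v : EuclideanSpace ℝ (Fin n)) : 0 ≤ segLen D p v :=
  ENNReal.toReal_nonneg


lemma exists_segLen_lb (hOpen : IsOpen D) (hBdd : Bornology.IsBounded D) (hConv : Convex ℝ D)
    {p : EuclideanSpace ℝ (Fin n)} (hp : p ∈ D) :
    ∃ ε > 0, ∀ v : EuclideanSpace ℝ (Fin n), ‖v‖ = 1 → ε ≤ segLen D p v := by
  obtain ⟨ε, hε, hball⟩ := Metric.isOpen_iff.mp hOpen p hp
  refine ⟨ε, hε, fun v hv => ?_⟩
  have hmem : ∀ t : ℝ, |t| < ε → t ∈ chord D p v := by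
    intro t ht
    apply hball
    simp only [Metric.mem_ball, dist_eq_norm]
    have : p + t • v - p = t • v := by abel
    rw [this, norm_smul, hv, mul_one, Real.norm_eq_abs]
    exact ht
  obtain ⟨hbb, hba⟩ := chord_bdd hBdd hp hv
  have h1 : sInf (chord D p v) ≤ -(ε/2) :=
    csInf_le hbb (hmem _ (by rw [abs_neg, abs_of_pos (by linarith)]; linarith))
  have h2 : ε/2 ≤ sSup (chord D p v) :=
    le_csSup hba (hmem _ (by rw [abs_of_pos (by linarith)]; linarith))
  rw [segLen_eq hOpen hBdd hConv hp hv]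
  linarith

lemma segLen_ub (hOpen : IsOpen D) (hBdd : Bornology.IsBounded D) (hConv : Convex ℝ D) :
    ∃ K > 0, ∀ p ∈ D, ∀ v : EuclideanSpace ℝ (Fin n), ‖v‖ = 1 → segLen D p v ≤ K := by
  obtain ⟨C, hC⟩ := hBdd.subset_ball (0 : EuclideanSpace ℝ (Fin n))
  refine ⟨2 * (2 * |C| + 1), by positivity, fun p hp v hv => ?_⟩
  have hsub : chord D p v ⊆ Set.Icc (-(2 * |C| + 1)) (2 * |C| + 1) := by
    intro t ht
    have h1 : ‖p + t • v‖ < C := by simpa using hC ht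
    have hpC : ‖p‖ < C := by simpa using hC hp
    have h2 : |t| = ‖t • v‖ := by rw [norm_smul, hv, mul_one, Real.norm_eq_abs]
    have h3 : ‖t • v‖ ≤ ‖p + t • v‖ + ‖p‖ := by
      have := norm_sub_le (p + t • v) p
      simpa using this
    have hCabs : C ≤ |C| := le_abs_self C
    have : |t| ≤ 2 * |C| + 1 := by linarith
    exact abs_le.mp this
  obtain ⟨hbb, hba⟩ := chord_bdd hBdd hp hv
  rw [segLen_eq hOpen hBdd hConv hp hv]
  have h1 : sSup (chord D p v) ≤ 2 * |C| + 1 :=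
    csSup_le ⟨0, zero_mem_chord hp⟩ (fun t ht => (hsub ht).2)
  have h2 : -(2 * |C| + 1) ≤ sInf (chord D p v) :=
    le_csInf ⟨0, zero_mem_chord hp⟩ (fun t ht => (hsub ht).1)
  linarith

lemma segLen_concave (hOpen : IsOpen D) (hBdd : Bornology.IsBounded D) (hConv : Convex ℝ D)
    {p q v : EuclideanSpace ℝ (Fin n)} (hp : p ∈ D) (hq : q ∈ D) (hv : ‖v‖ = 1)
    {a b : ℝ} (ha : 0 ≤ a) (hb : 0 ≤ b) (hab : a + b = 1) :
    a * segLen D p v + b * segLen D q v ≤ segLen D (a • p + b • q) v := by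
  have hcombo : a • p + b • q ∈ D := hConv hp hq ha hb hab
  have hkey : ∀ s ∈ chord D p v, ∀ t ∈ chord D q v, a * s + b * t ∈ chord D (a • p + b • q) v := by
    intro s hs t ht
    have h := hConv hs ht ha hb hab
    have heq : a • (p + s • v) + b • (q + t • v) = (a • p + b • q) + (a * s + b * t) • v := by
      module
    show (a • p + b • q) + (a * s + b * t) • v ∈ D
    rw [← heq]; exact h
  obtain ⟨hbbp, hbap⟩ := chord_bdd hBdd hp hv
  obtain ⟨hbbq, hbaq⟩ := chord_bdd hBdd hq hv
  obtain ⟨hbbc, hbac⟩ := chord_bdd hBdd hcombo hv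
  have hnep : (chord D p v).Nonempty := ⟨0, zero_mem_chord hp⟩
  have hneq : (chord D q v).Nonempty := ⟨0, zero_mem_chord hq⟩
  have hsup : a * sSup (chord D p v) + b * sSup (chord D q v) ≤ sSup (chord D (a • p + b • q) v) := by
    refine le_of_forall_pos_le_add (fun δ hδ => ?_)
    obtain ⟨s, hs, hs'⟩ := exists_lt_of_lt_csSup hnep (show sSup (chord D p v) - δ < sSup (chord D p v) by linarith)
    obtain ⟨t, ht, ht'⟩ := exists_lt_of_lt_csSup hneq (show sSup (chord D q v) - δ < sSup (chord D q v) by linarith)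
    have h1 : a * s + b * t ≤ sSup (chord D (a • p + b • q) v) := le_csSup hbac (hkey s hs t ht)
    have h2 : a * (sSup (chord D p v) - δ) ≤ a * s := by nlinarith
    have h3 : b * (sSup (chord D q v) - δ) ≤ b * t := by nlinarith
    nlinarith
  have hinf : sInf (chord D (a • p + b • q) v) ≤ a * sInf (chord D p v) + b * sInf (chord D q v) := by
    have : ∀ δ > 0, sInf (chord D (a • p + b • q) v) ≤ a * sInf (chord D p v) + b * sInf (chord D q v) + δ := by
      intro δ hδ
      obtain ⟨s, hs, hs'⟩ := exists_lt_of_csInf_lt hnep (show sInf (chord D p v) < sInf (chord D p v) + δ by linarith)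
      obtain ⟨t, ht, ht'⟩ := exists_lt_of_csInf_lt hneq (show sInf (chord D q v) < sInf (chord D q v) + δ by linarith)
      have h1 : sInf (chord D (a • p + b • q) v) ≤ a * s + b * t := csInf_le hbbc (hkey s hs t ht)
      have h2 : a * s ≤ a * (sInf (chord D p v) + δ) := by nlinarith
      have h3 : b * t ≤ b * (sInf (chord D q v) + δ) := by nlinarith
      nlinarith
    exact le_of_forall_pos_le_add this
  rw [segLen_eq hOpen hBdd hConv hp hv, segLen_eq hOpen hBdd hConv hq hv,
    segLen_eq hOpen hBdd hConv hcombo hv]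
  nlinarith [hsup, hinf]


noncomputable def inaccA (D : Set (EuclideanSpace ℝ (Fin n))) (p : EuclideanSpace ℝ (Fin n)) : ℝ :=
  sInf (segLen D p '' sphere (0 : EuclideanSpace ℝ (Fin n)) 1)

lemma inacc_bddBelow (D : Set (EuclideanSpace ℝ (Fin n))) (p : EuclideanSpace ℝ (Fin n)) :
    BddBelow (segLen D p '' sphere (0 : EuclideanSpace ℝ (Fin n)) 1) := by
  refine ⟨0, fun x hx => ?_⟩
  obtain ⟨v, _, rfl⟩ := hx
  exact segLen_nonneg p v

lemma inacc_nonneg (D : Set (EuclideanSpace ℝ (Fin n))) (p : EuclideanSpace ℝ (Fin n)) :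
    0 ≤ inaccA D p := by
  apply Real.sInf_nonneg
  rintro x ⟨v, _, rfl⟩
  exact segLen_nonneg p v

lemma inacc_le_segLen (D : Set (EuclideanSpace ℝ (Fin n))) (p : EuclideanSpace ℝ (Fin n))
    {v : EuclideanSpace ℝ (Fin n)} (hv : v ∈ sphere (0 : EuclideanSpace ℝ (Fin n)) 1) :
    inaccA D p ≤ segLen D p v :=
  csInf_le (inacc_bddBelow D p) ⟨v, hv, rfl⟩

lemma le_inacc (D : Set (EuclideanSpace ℝ (Fin n)))
    (hsph : (sphere (0 : EuclideanSpace ℝ (Fin n)) 1).Nonempty)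
    (p : EuclideanSpace ℝ (Fin n)) (c : ℝ)
    (h : ∀ v ∈ sphere (0 : EuclideanSpace ℝ (Fin n)) 1, c ≤ segLen D p v) :
    c ≤ inaccA D p := by
  apply le_csInf (hsph.image _)
  rintro x ⟨v, hv, rfl⟩
  exact h v hv

lemma inacc_empty_sphere (D : Set (EuclideanSpace ℝ (Fin n)))
    (hsph : ¬ (sphere (0 : EuclideanSpace ℝ (Fin n)) 1).Nonempty)
    (p : EuclideanSpace ℝ (Fin n)) : inaccA D p = 0 := by
  rw [Set.not_nonempty_iff_eq_empty] at hsph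
  rw [inaccA, hsph, Set.image_empty, Real.sInf_empty]

lemma inacc_pos (hOpen : IsOpen D) (hBdd : Bornology.IsBounded D) (hConv : Convex ℝ D)
    (hsph : (sphere (0 : EuclideanSpace ℝ (Fin n)) 1).Nonempty)
    {p : EuclideanSpace ℝ (Fin n)} (hp : p ∈ D) :
    0 < inaccA D p := by
  obtain ⟨ε, hε, h⟩ := exists_segLen_lb hOpen hBdd hConv hp
  have := le_inacc D hsph p ε (fun v hv => h v (by simpa using hv))
  linarith

lemma inacc_concaveOn (hOpen : IsOpen D) (hBdd : Bornology.IsBounded D) (hConv : Convex ℝ D) :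
    ConcaveOn ℝ D (inaccA D) := by
  refine ⟨hConv, fun x hx y hy a b ha hb hab => ?_⟩
  by_cases hsph : (sphere (0 : EuclideanSpace ℝ (Fin n)) 1).Nonempty
  · apply le_inacc D hsph
    intro v hv
    have hv' : ‖v‖ = 1 := by simpa using hv
    have h1 : inaccA D x ≤ segLen D x v := inacc_le_segLen D x hv
    have h2 : inaccA D y ≤ segLen D y v := inacc_le_segLen D y hv
    have h3 := segLen_concave hOpen hBdd hConv hx hy hv' ha hb hab
    have h4 : a * inaccA D x ≤ a * segLen D x v := by nlinarith
    have h5 : b * inaccA D y ≤ b * segLen D y v := by nlinarith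
    simp only [smul_eq_mul]
    linarith
  · simp only [inacc_empty_sphere D hsph, smul_eq_mul, mul_zero, add_zero, le_refl]

lemma inacc_continuousOn (hOpen : IsOpen D) (hBdd : Bornology.IsBounded D) (hConv : Convex ℝ D) :
    ContinuousOn (inaccA D) D :=
  (inacc_concaveOn hOpen hBdd hConv).continuousOn hOpen

lemma inacc_bddAbove (hOpen : IsOpen D) (hBdd : Bornology.IsBounded D) (hConv : Convex ℝ D) :
    BddAbove (inaccA D '' D) := by
  obtain ⟨K, hK, h⟩ := segLen_ub hOpen hBdd hConv
  refine ⟨K, ?_⟩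
  rintro x ⟨p, hp, rfl⟩
  by_cases hsph : (sphere (0 : EuclideanSpace ℝ (Fin n)) 1).Nonempty
  · obtain ⟨v, hv⟩ := hsph
    exact (inacc_le_segLen D p hv).trans (h p hp v (by simpa using hv))
  · rw [inacc_empty_sphere D hsph]
    linarith


noncomputable def RmaxA (D : Set (EuclideanSpace ℝ (Fin n))) : ℝ := sSup (inaccA D '' D)

lemma inacc_le_Rmax (hOpen : IsOpen D) (hBdd : Bornology.IsBounded D) (hConv : Convex ℝ D)
    {p : EuclideanSpace ℝ (Fin n)} (hp : p ∈ D) : inaccA D p ≤ RmaxA D :=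
  le_csSup (inacc_bddAbove hOpen hBdd hConv) ⟨p, hp, rfl⟩

lemma exists_lt_inacc (hNe : D.Nonempty) {r : ℝ} (hr : r < RmaxA D) :
    ∃ p ∈ D, r < inaccA D p := by
  obtain ⟨x, ⟨p, hp, rfl⟩, h⟩ := exists_lt_of_lt_csSup (hNe.image _) hr
  exact ⟨p, hp, h⟩

lemma exists_support (hOpen : IsOpen D) (hNe : D.Nonempty) (hConv : Convex ℝ D)
    {p : EuclideanSpace ℝ (Fin n)} (hp : p ∉ D) :
    ∃ u : EuclideanSpace ℝ (Fin n), ‖u‖ = 1 ∧ ∀ x ∈ D, ⟪x - p, u⟫ < 0 := by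
  obtain ⟨f, hf⟩ := geometric_hahn_banach_open_point hConv hOpen hp
  set w := (InnerProductSpace.toDual ℝ (EuclideanSpace ℝ (Fin n))).symm f with hw
  have hwx : ∀ x, ⟪w, x⟫ = f x := fun x => InnerProductSpace.toDual_symm_apply
  have hw0 : w ≠ 0 := by
    intro h0
    obtain ⟨y, hy⟩ := hNe
    have h1 := hf y hy
    have h2 : f y = 0 := by rw [← hwx y, h0, inner_zero_left]
    have h3 : f p = 0 := by rw [← hwx p, h0, inner_zero_left]
    rw [h2, h3] at h1
    exact lt_irrefl 0 h1
  refine ⟨‖w‖⁻¹ • w, ?_, fun x hx => ?_⟩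
  · rw [norm_smul, norm_inv, norm_norm, inv_mul_cancel₀ (norm_ne_zero_iff.mpr hw0)]
  · rw [real_inner_comm, real_inner_smul_left]
    have h1 : ⟪w, x - p⟫ = f x - f p := by rw [inner_sub_right, hwx, hwx]
    rw [h1]
    have h2 : f x - f p < 0 := sub_neg.mpr (hf x hx)
    have h3 : (0:ℝ) < ‖w‖⁻¹ := inv_pos.mpr (norm_pos_iff.mpr hw0)
    exact mul_neg_of_pos_of_neg h3 h2

lemma interior_closure_subset (hOpen : IsOpen D) (hNe : D.Nonempty) (hConv : Convex ℝ D) :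
    interior (closure D) ⊆ D := by
  intro x hx
  obtain ⟨y, hy⟩ := hNe
  have hyi : y ∈ interior D := by rwa [hOpen.interior_eq]
  by_cases hxy : x = y
  · rwa [hxy]
  obtain ⟨ε, hε, hball⟩ := Metric.isOpen_iff.mp isOpen_interior x hx
  have hne : (0:ℝ) < ‖x - y‖ := by
    rw [norm_pos_iff, sub_ne_zero]
    exact hxy
  set t : ℝ := ε / (2 * ‖x - y‖) with ht
  have htpos : 0 < t := by positivity
  set z := x + t • (x - y) with hz
  have hzball : z ∈ closure D := by
    apply interior_subset
    apply hball
    simp only [Metric.mem_ball, dist_eq_norm, hz]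
    have : x + t • (x - y) - x = t • (x - y) := by abel
    rw [this, norm_smul, Real.norm_eq_abs, abs_of_pos htpos, ht]
    rw [div_mul_eq_mul_div]
    rw [div_lt_iff₀ (by positivity)]
    nlinarith
  have hseg : x ∈ openSegment ℝ z y := by
    refine ⟨1/(1+t), t/(1+t), by positivity, by positivity, ?_, ?_⟩
    · field_simp
    · rw [hz]
      have h1t : (1:ℝ) + t ≠ 0 := by positivity
      match_scalars <;> field_simp <;> ring
  have := hConv.openSegment_closure_interior_subset_interior hzball hyi hseg
  rwa [hOpen.interior_eq] at this

lemma le_inacc_of_mem_closure (hOpen : IsOpen D) (hBdd : Bornology.IsBounded D)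
    (hConv : Convex ℝ D) {r : ℝ} {p : EuclideanSpace ℝ (Fin n)} (hp : p ∈ D)
    (hcl : p ∈ closure {q | q ∈ D ∧ r ≤ inaccA D q}) : r ≤ inaccA D p := by
  have hc : ContinuousAt (inaccA D) p :=
    (inacc_continuousOn hOpen hBdd hConv).continuousAt (hOpen.mem_nhds hp)
  rw [mem_closure_iff_seq_limit] at hcl
  obtain ⟨x, hx, hlim⟩ := hcl
  have htend : Filter.Tendsto (fun k => inaccA D (x k)) Filter.atTop (nhds (inaccA D p)) :=
    (hc.tendsto).comp hlim
  exact ge_of_tendsto htend (Filter.Eventually.of_forall fun k => (hx k).2)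


lemma halfball_arith_pos {R t c : ℝ} (hR : 0 < R) (ht : 0 < t) (ht2 : t ≤ R/2)
    (hc0 : 0 ≤ c) (hc1 : c ≤ 1) :
    ∃ s₁ s₂ : ℝ, R ≤ s₂ - s₁ ∧
      ∀ s : ℝ, s₁ < s → s < s₂ → s^2 - 2*s*t*c + t^2 < R^2 ∧ s*c < t := by
  set a : ℝ := t^2 * (1 - c^2) with ha
  have h1c : (0:ℝ) ≤ 1 - c^2 := by nlinarith
  have ha0 : 0 ≤ a := mul_nonneg (sq_nonneg t) h1c
  have haR : a ≤ R^2/4 := by nlinarith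
  set w : ℝ := Real.sqrt (R^2 - a) with hw
  have hw0 : 0 ≤ w := Real.sqrt_nonneg _
  have hw2 : w^2 = R^2 - a := Real.sq_sqrt (by nlinarith)
  have hwR : R ≤ 2*w := by nlinarith
  by_cases hcase : c = 0 ∨ t*c + w ≤ t/c
  · -- full quadratic interval
    refine ⟨t*c - w, t*c + w, by linarith, fun s hs1 hs2 => ?_⟩
    constructor
    · nlinarith
    · rcases hcase with h0 | hle
      · rw [h0]; simpa using ht
      · have hc0' : 0 < c := by
          rcases lt_or_eq_of_le hc0 with h | h
          · exact h
          · exfalso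
            rw [← h] at hle
            simp at hle
            nlinarith
        have : s < t/c := lt_of_lt_of_le hs2 hle
        calc s*c < (t/c)*c := by nlinarith
        _ = t := by field_simp
  · push_neg at hcase
    obtain ⟨hc0', hlt⟩ := hcase
    have hcpos : 0 < c := lt_of_le_of_ne hc0 (Ne.symm hc0')
    refine ⟨t*c - w, t/c, ?_, fun s hs1 hs2 => ?_⟩
    · -- t/c - t*c + w ≥ R
      have hwle : w ≤ R := by nlinarith
      have hkey : R^2 - a ≤ w * R := by nlinarith
      have h2c : a * c ≤ R * (t * (1-c^2)) := by
        nlinarith [mul_le_mul_of_nonneg_left (show t*c ≤ R by nlinarith)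
          (mul_nonneg ht.le h1c)]
      have h2 : a ≤ R * (t/c - t*c) := by
        have heq : t/c - t*c = t*(1-c^2)/c := by field_simp
        rw [heq, ← mul_div_assoc, le_div_iff₀ hcpos]
        linarith [h2c]
      nlinarith
    · constructor
      · have hsub : s < t*c + w := lt_trans hs2 hlt
        nlinarith
      · calc s*c < (t/c)*c := by nlinarith
        _ = t := by field_simp

lemma halfball_arith {R t c : ℝ} (hR : 0 < R) (ht : 0 < t) (ht2 : t ≤ R/2)
    (hc : |c| ≤ 1) :
    ∃ s₁ s₂ : ℝ, R ≤ s₂ - s₁ ∧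
      ∀ s : ℝ, s₁ < s → s < s₂ → s^2 - 2*s*t*c + t^2 < R^2 ∧ s*c < t := by
  rcases le_or_gt 0 c with hc0 | hc0
  · exact halfball_arith_pos hR ht ht2 hc0 (le_of_abs_le hc)
  · obtain ⟨s₁, s₂, hlen, h⟩ := halfball_arith_pos hR ht ht2 (by linarith : (0:ℝ) ≤ -c)
      (by rw [abs_of_neg hc0] at hc; linarith)
    refine ⟨-s₂, -s₁, by linarith, fun s hs1 hs2 => ?_⟩
    obtain ⟨h1, h2⟩ := h (-s) (by linarith) (by linarith)
    constructor
    · nlinarith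
    · nlinarith


lemma halfball_segLen (hOpen : IsOpen D) (hBdd : Bornology.IsBounded D) (hConv : Convex ℝ D)
    {p u : EuclideanSpace ℝ (Fin n)} (hu : ‖u‖ = 1) {R : ℝ} (hR : 0 < R)
    (hsub : ∀ x : EuclideanSpace ℝ (Fin n), ‖x - p‖ < R → ⟪x - p, u⟫ < 0 → x ∈ D)
    {t : ℝ} (ht : 0 < t) (ht2 : t ≤ R/2) :
    (p - t • u ∈ D) ∧ ∀ v : EuclideanSpace ℝ (Fin n), ‖v‖ = 1 → R ≤ segLen D (p - t • u) v := by
  set z := p - t • u with hz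
  have hzp : z - p = (-t) • u := by rw [hz]; module
  have huu : ⟪u, u⟫ = 1 := by rw [real_inner_self_eq_norm_sq, hu]; norm_num
  have hzD : z ∈ D := by
    apply hsub
    · rw [hzp, norm_smul, hu, mul_one, Real.norm_eq_abs, abs_of_neg (by linarith : -t < 0)]
      linarith
    · rw [hzp, real_inner_smul_left, huu]
      simpa using ht
  refine ⟨hzD, fun v hv => ?_⟩
  set c : ℝ := ⟪v, u⟫ with hc
  have hcabs : |c| ≤ 1 := by
    rw [hc]
    calc |⟪v, u⟫| ≤ ‖v‖ * ‖u‖ := abs_real_inner_le_norm v u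
    _ = 1 := by rw [hv, hu]; norm_num
  obtain ⟨s₁, s₂, hlen, hmem⟩ := halfball_arith hR ht ht2 hcabs
  have hchord : Set.Ioo s₁ s₂ ⊆ chord D z v := by
    intro s hs
    obtain ⟨hq, hl⟩ := hmem s hs.1 hs.2
    show z + s • v ∈ D
    have hdiff : z + s • v - p = s • v - t • u := by rw [hz]; module
    apply hsub
    · rw [hdiff]
      have hnormsq : ‖s • v - t • u‖^2 = s^2 - 2*s*t*c + t^2 := by
        rw [norm_sub_sq_real, norm_smul, norm_smul, real_inner_smul_left,
          real_inner_smul_right, hv, hu, ← hc]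
        simp [Real.norm_eq_abs, sq_abs]
        ring
      nlinarith [norm_nonneg (s • v - t • u)]
    · rw [hdiff]
      have : ⟪s • v - t • u, u⟫ = s * c - t := by
        rw [inner_sub_left, real_inner_smul_left, real_inner_smul_left, huu, ← hc]
        ring
      rw [this]
      linarith
  obtain ⟨hbb, hba⟩ := chord_bdd hBdd hzD hv
  have hs12 : s₁ < s₂ := by linarith
  have h1 : s₂ ≤ sSup (chord D z v) := by
    have := csSup_le_csSup hba (Set.nonempty_Ioo.mpr hs12) hchord
    rwa [csSup_Ioo hs12] at this
  have h2 : sInf (chord D z v) ≤ s₁ := by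
    have := csInf_le_csInf hbb (Set.nonempty_Ioo.mpr hs12) hchord
    rwa [csInf_Ioo hs12] at this
  rw [segLen_eq hOpen hBdd hConv hzD hv]
  linarith


lemma halfball_in_closure (hOpen : IsOpen D) (hBdd : Bornology.IsBounded D) (hConv : Convex ℝ D)
    {p u : EuclideanSpace ℝ (Fin n)} (hu : ‖u‖ = 1) {R : ℝ}
    (hsupp : ∀ y ∈ D, ⟪y - p, u⟫ < 0)
    (hEr : ∀ r : ℝ, r < R → p ∈ closure {q | q ∈ D ∧ r ≤ inaccA D q}) :
    ∀ x : EuclideanSpace ℝ (Fin n), ‖x - p‖ < R → ⟪x - p, u⟫ < 0 → x ∈ closure D := by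
  intro x hx1 hx2
  have hxp : x ≠ p := by
    intro h
    rw [h] at hx2
    simp at hx2
  set s : ℝ := ‖x - p‖ with hs
  have hs0 : 0 < s := norm_pos_iff.mpr (sub_ne_zero.mpr hxp)
  set v : EuclideanSpace ℝ (Fin n) := s⁻¹ • (p - x) with hv
  have hvnorm : ‖v‖ = 1 := by
    rw [hv, norm_smul, norm_inv, Real.norm_eq_abs, abs_of_pos hs0, norm_sub_rev]
    exact inv_mul_cancel₀ hs0.ne'
  set δ : ℝ := ⟪v, u⟫ with hδ
  have hδ0 : 0 < δ := by
    rw [hδ, hv, real_inner_smul_left]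
    have : ⟪p - x, u⟫ = -⟪x - p, u⟫ := by
      rw [← inner_neg_left]
      congr 1
      abel
    rw [this]
    have := inv_pos.mpr hs0
    nlinarith
  have hxpv : x = p - s • v := by
    rw [hv, smul_smul, mul_inv_cancel₀ hs0.ne', one_smul]
    abel
  rw [Metric.mem_closure_iff]
  intro ε hε
  set r : ℝ := (R + s)/2 with hr
  have hsr : s < r := by rw [hr]; linarith
  have hrR : r < R := by rw [hr]; linarith
  set ε' : ℝ := min ε (δ * (r - s) / 2) with hε'
  have hε'0 : 0 < ε' := lt_min hε (div_pos (mul_pos hδ0 (by linarith)) two_pos)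
  have hp' := hEr r hrR
  rw [Metric.mem_closure_iff] at hp'
  obtain ⟨q, ⟨hqD, hqi⟩, hqdist⟩ := hp' ε' hε'0
  -- chord of q in direction v
  obtain ⟨hbb, hba⟩ := chord_bdd hBdd hqD hvnorm
  obtain ⟨hia, hib⟩ := sInf_chord_neg hOpen hBdd hqD hvnorm
  have hlen : r ≤ sSup (chord D q v) - sInf (chord D q v) := by
    have h1 := inacc_le_segLen D q (by simpa using hvnorm)
    rw [segLen_eq hOpen hBdd hConv hqD hvnorm] at h1
    linarith
  have hfwd : sSup (chord D q v) ≤ ⟪p - q, u⟫ / δ := by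
    apply csSup_le ⟨0, zero_mem_chord hqD⟩
    intro τ hτ
    have hmem : q + τ • v ∈ D := hτ
    have h1 := hsupp _ hmem
    have h2 : ⟪q + τ • v - p, u⟫ = ⟪q - p, u⟫ + τ * δ := by
      have : q + τ • v - p = (q - p) + τ • v := by abel
      rw [this, inner_add_left, real_inner_smul_left, hδ]
    rw [h2] at h1
    have h3 : ⟪q - p, u⟫ = -⟪p - q, u⟫ := by
      rw [← inner_neg_left]; congr 1; abel
    rw [h3] at h1
    rw [le_div_iff₀ hδ0]
    linarith
  have hpqu : ⟪p - q, u⟫ < ε' := by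
    calc ⟪p - q, u⟫ ≤ |⟪p - q, u⟫| := le_abs_self _
    _ ≤ ‖p - q‖ * ‖u‖ := abs_real_inner_le_norm _ _
    _ = dist p q := by rw [hu, mul_one, dist_eq_norm]
    _ < ε' := hqdist
  have hbq : sSup (chord D q v) < (r - s) / 2 := by
    have h1 : ε' ≤ δ * (r - s) / 2 := min_le_right _ _
    have h2 : ⟪p - q, u⟫ / δ < (r - s) / 2 := by
      rw [div_lt_iff₀ hδ0]
      calc ⟪p - q, u⟫ < ε' := hpqu
      _ ≤ δ * (r - s) / 2 := h1
      _ = (r - s) / 2 * δ := by ring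
    linarith [hfwd]
  have haq : sInf (chord D q v) < -s := by
    have : (r - s)/2 - r < -s := by linarith
    linarith
  have hmem : -s ∈ chord D q v := Ioo_subset_chord hConv hqD ⟨haq, by linarith⟩
  refine ⟨q + (-s) • v, hmem, ?_⟩
  have : x - (q + (-s) • v) = p - q := by rw [hxpv]; module
  rw [dist_eq_norm, this, ← dist_eq_norm]
  exact lt_of_lt_of_le hqdist (min_le_left _ _)


lemma boundary_case (hOpen : IsOpen D) (hBdd : Bornology.IsBounded D) (hConv : Convex ℝ D)
    (hNe : D.Nonempty) (hsph : (sphere (0 : EuclideanSpace ℝ (Fin n)) 1).Nonempty)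
    {p : EuclideanSpace ℝ (Fin n)} (hpD : p ∉ D) {R : ℝ} (hR : 0 < R)
    (hRub : ∀ q ∈ D, inaccA D q ≤ R)
    (hEr : ∀ r : ℝ, r < R → p ∈ closure {q | q ∈ D ∧ r ≤ inaccA D q}) :
    ∃ u : EuclideanSpace ℝ (Fin n), ‖u‖ = 1 ∧
      ∀ t : ℝ, 0 < t → t ≤ R/2 → (p - t • u ∈ D ∧ inaccA D (p - t • u) = R) := by
  obtain ⟨u, hu, hsupp⟩ := exists_support hOpen hNe hConv hpD
  have hclO : ∀ x : EuclideanSpace ℝ (Fin n), ‖x - p‖ < R → ⟪x - p, u⟫ < 0 → x ∈ closure D :=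
    halfball_in_closure hOpen hBdd hConv hu hsupp hEr
  have hO : ∀ x : EuclideanSpace ℝ (Fin n), ‖x - p‖ < R → ⟪x - p, u⟫ < 0 → x ∈ D := by
    intro x h1 h2
    apply interior_closure_subset hOpen hNe hConv
    have hOopen : IsOpen {y : EuclideanSpace ℝ (Fin n) | ‖y - p‖ < R ∧ ⟪y - p, u⟫ < 0} := by
      apply IsOpen.and
      · exact isOpen_lt ((continuous_id.sub continuous_const).norm) continuous_const
      · exact isOpen_lt ((continuous_id.sub continuous_const).inner continuous_const)
          continuous_const
    have hsubcl : {y : EuclideanSpace ℝ (Fin n) | ‖y - p‖ < R ∧ ⟪y - p, u⟫ < 0} ⊆ closure D :=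
      fun y hy => hclO y hy.1 hy.2
    exact (hOopen.subset_interior_iff.mpr hsubcl) ⟨h1, h2⟩
  refine ⟨u, hu, fun t ht ht2 => ?_⟩
  obtain ⟨hzD, hseg⟩ := halfball_segLen hOpen hBdd hConv hu hR hO ht ht2
  refine ⟨hzD, le_antisymm (hRub _ hzD) ?_⟩
  exact le_inacc D hsph _ R (fun v hv => hseg v (by simpa using hv))


lemma inaccA_eq (D : Set (EuclideanSpace ℝ (Fin n))) : inaccA D = inacc D := rfl

lemma RmaxA_eq (D : Set (EuclideanSpace ℝ (Fin n))) : RmaxA D = Rmax D := rfl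

end SegAux

/-- for a bounded convex domain `D ⊂ ℝⁿ`, the inaccessibility function
attains its supremum `R` on `D`; moreover `I_D = E_R` and
`I_D ∩ D = E_R ∩ D = {p ∈ D | r(p) = R}`. -/
theorem sup_attained_and_maxInaccSet_eq {n : ℕ} (D : Set (EuclideanSpace ℝ (Fin n)))
    (hOpen : IsOpen D) (hNe : D.Nonempty) (hBdd : Bornology.IsBounded D)
    (hConv : Convex ℝ D) :
    (∃ p ∈ D, inacc D p = Rmax D) ∧
    maxInaccSet D = Eset D (Rmax D) ∧
    maxInaccSet D ∩ D = {p | p ∈ D ∧ inacc D p = Rmax D} ∧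
    Eset D (Rmax D) ∩ D = {p | p ∈ D ∧ inacc D p = Rmax D} := by
  classical
  have hAe : SegAux.inaccA D = inacc D := SegAux.inaccA_eq D
  have hRe : SegAux.RmaxA D = Rmax D := SegAux.RmaxA_eq D
  have hEsetDef : ∀ r : ℝ, Eset D r = closure {q | q ∈ D ∧ r ≤ inacc D q} := fun _ => rfl
  have hmono : ∀ r r' : ℝ, r ≤ r' → Eset D r' ⊆ Eset D r := by
    intro r r' h
    apply closure_mono
    rintro q ⟨h1, h2⟩
    exact ⟨h1, le_trans h h2⟩
  have hIdef : ∀ x, x ∈ maxInaccSet D ↔ ∀ r : ℝ, r < Rmax D → x ∈ Eset D r := by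
    intro x
    rw [maxInaccSet]
    constructor
    · intro hx r hr
      exact Set.mem_iInter₂.mp hx r hr
    · intro hx
      exact Set.mem_iInter₂.mpr (fun r hr => hx r hr)
  by_cases hsph : (sphere (0 : EuclideanSpace ℝ (Fin n)) 1).Nonempty
  · -- nontrivial case
    have hRub : ∀ q ∈ D, inacc D q ≤ Rmax D := by
      intro q hq
      rw [← hAe, ← hRe]
      exact SegAux.inacc_le_Rmax hOpen hBdd hConv hq
    have hRpos : 0 < Rmax D := by
      obtain ⟨p₀, hp₀⟩ := hNe
      have h1 : 0 < inacc D p₀ := by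
        rw [← hAe]; exact SegAux.inacc_pos hOpen hBdd hConv hsph hp₀
      exact lt_of_lt_of_le h1 (hRub p₀ hp₀)
    have hUSC : ∀ r : ℝ, ∀ p ∈ D, p ∈ Eset D r → r ≤ inacc D p := by
      intro r p hp hpE
      rw [← hAe]
      apply SegAux.le_inacc_of_mem_closure hOpen hBdd hConv hp
      rw [hAe]
      exact hpE
    have hKey : ∀ p, (∀ r : ℝ, r < Rmax D → p ∈ Eset D r) →
        (p ∈ Eset D (Rmax D) ∧ ∃ z ∈ D, inacc D z = Rmax D) := by
      intro p hp
      by_cases hpD : p ∈ D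
      · have h1 : ∀ r : ℝ, r < Rmax D → r ≤ inacc D p := fun r hr => hUSC r p hpD (hp r hr)
        have h2 : Rmax D ≤ inacc D p := by
          by_contra h
          push_neg at h
          have := h1 ((inacc D p + Rmax D)/2) (by linarith)
          linarith
        have h3 : inacc D p = Rmax D := le_antisymm (hRub p hpD) h2
        exact ⟨subset_closure ⟨hpD, h2⟩, ⟨p, hpD, h3⟩⟩
      · have hEr' : ∀ r : ℝ, r < Rmax D → p ∈ closure {q | q ∈ D ∧ r ≤ SegAux.inaccA D q} := by
          intro r hr
          rw [hAe]
          exact hp r hr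
        obtain ⟨u, hu, hall⟩ := SegAux.boundary_case hOpen hBdd hConv hNe hsph hpD hRpos
          (by rw [hAe]; exact hRub) hEr'
        constructor
        · rw [hEsetDef, Metric.mem_closure_iff]
          intro ε hε
          set t := min (Rmax D / 2) (ε / 2) with htdef
          have ht0 : 0 < t := lt_min (by linarith) (by linarith)
          obtain ⟨hzD, hzeq⟩ := hall t ht0 (min_le_left _ _)
          rw [hAe] at hzeq
          refine ⟨p - t • u, ⟨hzD, hzeq.ge⟩, ?_⟩
          rw [dist_eq_norm, sub_sub_cancel, norm_smul, hu, mul_one, Real.norm_eq_abs,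
            abs_of_pos ht0]
          exact lt_of_le_of_lt (min_le_right _ _) (by linarith)
        · obtain ⟨hzD, hzeq⟩ := hall (Rmax D / 2) (by linarith) le_rfl
          rw [hAe] at hzeq
          exact ⟨_, hzD, hzeq⟩
    have hTne : ∀ k : ℕ, (Eset D (Rmax D - 1/(k+1))).Nonempty := by
      intro k
      have hpos : (0:ℝ) < 1/((k:ℝ)+1) := by positivity
      have hlt : Rmax D - 1/((k:ℝ)+1) < Rmax D := by linarith
      obtain ⟨q, hq, hq2⟩ := SegAux.exists_lt_inacc (D := D) hNe (by rw [hRe]; exact hlt)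
      rw [hAe] at hq2
      exact ⟨q, subset_closure ⟨hq, hq2.le⟩⟩
    have hEclosed : ∀ r : ℝ, IsClosed (Eset D r) := fun r => isClosed_closure
    have hEbdd : ∀ r : ℝ, Eset D r ⊆ closure D := by
      intro r
      rw [hEsetDef]
      exact closure_mono (fun q hq => hq.1)
    have hcompact : IsCompact (Eset D (Rmax D - 1/((0:ℕ)+1))) := by
      apply Metric.isCompact_of_isClosed_isBounded (hEclosed _)
      exact hBdd.closure.subset (hEbdd _)
    have hnested : ∀ k : ℕ, Eset D (Rmax D - 1/((k+1:ℕ)+1)) ⊆ Eset D (Rmax D - 1/((k:ℕ)+1)) := by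
      intro k
      apply hmono
      have h1 : (1:ℝ)/((k:ℝ)+1+1) ≤ 1/((k:ℝ)+1) := by
        apply one_div_le_one_div_of_le
        · positivity
        · linarith
      push_cast
      linarith
    obtain ⟨pI, hpI⟩ := IsCompact.nonempty_iInter_of_sequence_nonempty_isCompact_isClosed
      (fun k : ℕ => Eset D (Rmax D - 1/((k:ℕ)+1))) hnested hTne hcompact (fun k => hEclosed _)
    have hpIall : ∀ r : ℝ, r < Rmax D → pI ∈ Eset D r := by
      intro r hr
      obtain ⟨k, hk⟩ := exists_nat_one_div_lt (show (0:ℝ) < Rmax D - r by linarith)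
      have h1 : pI ∈ Eset D (Rmax D - 1/((k:ℝ)+1)) := Set.mem_iInter.mp hpI k
      exact hmono _ _ (by linarith) h1
    obtain ⟨hpIE, zEx⟩ := hKey pI hpIall
    have hIER : maxInaccSet D = Eset D (Rmax D) := by
      apply Set.Subset.antisymm
      · intro x hx
        exact (hKey x ((hIdef x).mp hx)).1
      · intro x hx
        exact (hIdef x).mpr (fun r hr => hmono r (Rmax D) hr.le hx)
    have hERD : Eset D (Rmax D) ∩ D = {p | p ∈ D ∧ inacc D p = Rmax D} := by
      ext q
      simp only [Set.mem_inter_iff, Set.mem_setOf_eq]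
      constructor
      · rintro ⟨h1, h2⟩
        exact ⟨h2, le_antisymm (hRub q h2) (hUSC _ q h2 h1)⟩
      · rintro ⟨h1, h2⟩
        exact ⟨subset_closure ⟨h1, h2.ge⟩, h1⟩
    exact ⟨zEx, hIER, by rw [hIER, hERD], hERD⟩
  · -- degenerate case : empty sphere
    have h0 : ∀ p, inacc D p = 0 := by
      intro p
      rw [← hAe]
      exact SegAux.inacc_empty_sphere D hsph p
    have hRm : Rmax D = 0 := by
      have himg : inacc D '' D = {0} := by
        have h1 : inacc D '' D = (fun _ => (0:ℝ)) '' D := Set.image_congr (fun p _ => h0 p)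
        rw [h1, hNe.image_const]
      rw [Rmax, himg, csSup_singleton]
    have hset : ∀ r : ℝ, r ≤ 0 → Eset D r = closure D := by
      intro r hr
      have hseq : {q | q ∈ D ∧ r ≤ inacc D q} = D := by
        ext q
        constructor
        · exact fun h => h.1
        · intro h
          exact ⟨h, by rw [h0]; exact hr⟩
      rw [hEsetDef, hseq]
    have hER : Eset D (Rmax D) = closure D := hset _ (le_of_eq hRm)
    have hI : maxInaccSet D = closure D := by
      apply Set.Subset.antisymm
      · intro x hx
        have h1 := (hIdef x).mp hx (Rmax D - 1) (by linarith)
        rwa [hset _ (by rw [hRm]; linarith)] at h1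
      · intro x hx
        apply (hIdef x).mpr
        intro r hr
        rw [hset r (by rw [hRm] at hr; exact hr.le)]
        exact hx
    have hS : {p | p ∈ D ∧ inacc D p = Rmax D} = D := by
      ext p
      simp only [Set.mem_setOf_eq]
      constructor
      · exact fun h => h.1
      · intro h
        exact ⟨h, by rw [h0, hRm]⟩
    obtain ⟨p₀, hp₀⟩ := hNe
    have hID : maxInaccSet D ∩ D = {p | p ∈ D ∧ inacc D p = Rmax D} := by
      rw [hI, hS]
      apply Set.Subset.antisymm
      · exact fun x hx => hx.2
      · exact fun x hx => ⟨subset_closure hx, hx⟩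
    refine ⟨⟨p₀, hp₀, by rw [h0, hRm]⟩, by rw [hI, hER], hID, ?_⟩
    rw [hER, hS]
    apply Set.Subset.antisymm
    · exact fun x hx => hx.2
    · exact fun x hx => ⟨subset_closure hx, hx⟩
end

section
/- Let D ⊂ ℝⁿ be a bounded convex domain with R = max_{p ∈ D} r(p). For every r ∈ [0, R], the set E_r = closure of {p ∈ D : r(p) ≥ r} is convex. -/
open scoped RealInnerProductSpace
open Metric MeasureTheory

/- ---------------- Auxiliary lemmas ---------------- -/

open Set

/-- An open bounded convex nonempty subset of `ℝ` is the open interval between its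
infimum and supremum. -/
lemma open_convex_bdd_eq_Ioo {s : Set ℝ} (ho : IsOpen s) (hc : Convex ℝ s)
    (hb : Bornology.IsBounded s) (hne : s.Nonempty) :
    s = Set.Ioo (sInf s) (sSup s) := by
  have hba := hb.bddAbove
  have hbb := hb.bddBelow
  apply Subset.antisymm
  · intro t ht
    obtain ⟨ε, hε, hball⟩ := Metric.isOpen_iff.1 ho t ht
    have hmem : ∀ u : ℝ, |u - t| < ε → u ∈ s := by
      intro u hu
      exact hball (by simpa [Real.dist_eq] using hu)
    have h1 : t - ε/2 ∈ s := hmem _ (by rw [abs_of_nonpos (by linarith)]; linarith)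
    have h2 : t + ε/2 ∈ s := hmem _ (by rw [abs_of_nonneg (by linarith)]; linarith)
    have i1 := csInf_le hbb h1
    have i2 := le_csSup hba h2
    exact ⟨by linarith, by linarith⟩
  · rintro t ⟨h1, h2⟩
    obtain ⟨x, hx, hxt⟩ := (csInf_lt_iff hbb hne).1 h1
    obtain ⟨y, hy, hty⟩ := (lt_csSup_iff hba hne).1 h2
    exact hc.ordConnected.out hx hy ⟨hxt.le, hty.le⟩

section line

variable {n : ℕ} {D : Set (EuclideanSpace ℝ (Fin n))}

/-- The parameter set of the line through `p` in direction `v`. -/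
def lineSet (D : Set (EuclideanSpace ℝ (Fin n))) (p v : EuclideanSpace ℝ (Fin n)) : Set ℝ :=
  {t : ℝ | p + t • v ∈ D}

lemma lineSet_isOpen (hOpen : IsOpen D) (p v : EuclideanSpace ℝ (Fin n)) :
    IsOpen (lineSet D p v) :=
  hOpen.preimage (by continuity)

lemma lineSet_convex (hConv : Convex ℝ D) (p v : EuclideanSpace ℝ (Fin n)) :
    Convex ℝ (lineSet D p v) := by
  intro s hs t ht a b ha hb hab
  have h := hConv hs ht ha hb hab
  have h2 : (a + b) • p + (a * s + b * t) • v ∈ D := by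
    have heq : a • (p + s • v) + b • (p + t • v) = (a + b) • p + (a * s + b * t) • v := by
      module
    rw [← heq]
    exact h
  rw [hab, one_smul] at h2
  show p + (a • s + b • t) • v ∈ D
  exact h2

lemma lineSet_bounded (hBdd : Bornology.IsBounded D) (p : EuclideanSpace ℝ (Fin n))
    {v : EuclideanSpace ℝ (Fin n)} (hv : ‖v‖ = 1) :
    Bornology.IsBounded (lineSet D p v) := by
  obtain ⟨M, hM⟩ := hBdd.subset_closedBall 0
  have hsub : lineSet D p v ⊆ Set.Icc (-(M + ‖p‖)) (M + ‖p‖) := by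
    intro t ht
    have h1 : ‖p + t • v‖ ≤ M := by simpa using hM ht
    have h2 : ‖t • v‖ = |t| := by
      have := norm_smul t v
      rw [hv, mul_one, Real.norm_eq_abs] at this
      exact this
    have h3 : ‖t • v‖ ≤ ‖p + t • v‖ + ‖p‖ := by
      calc ‖t • v‖ = ‖(p + t • v) - p‖ := by rw [add_sub_cancel_left]
        _ ≤ ‖p + t • v‖ + ‖p‖ := norm_sub_le _ _
    have : |t| ≤ M + ‖p‖ := by rw [← h2]; linarith
    exact abs_le.1 this
  exact (Metric.isBounded_Icc _ _).subset hsub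

lemma segLen_eq (hOpen : IsOpen D) (hBdd : Bornology.IsBounded D) (hConv : Convex ℝ D)
    {p v : EuclideanSpace ℝ (Fin n)} (hp : p ∈ D) (hv : ‖v‖ = 1) :
    segLen D p v = sSup (lineSet D p v) - sInf (lineSet D p v) := by
  have h0 : (0 : ℝ) ∈ lineSet D p v := by simp [lineSet, hp]
  have hcc : connectedComponentIn {t : ℝ | p + t • v ∈ D} 0 = lineSet D p v :=
    (lineSet_convex hConv p v).isPreconnected.connectedComponentIn h0
  have heq := open_convex_bdd_eq_Ioo (lineSet_isOpen hOpen p v) (lineSet_convex hConv p v)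
    (lineSet_bounded hBdd p hv) ⟨0, h0⟩
  set aa := sInf (lineSet D p v) with haa
  set bb := sSup (lineSet D p v) with hbb
  have hle : aa ≤ bb := by
    have h := heq ▸ h0
    exact (h.1.trans h.2).le
  have hvol : volume (lineSet D p v) = ENNReal.ofReal (bb - aa) := by
    rw [heq, Real.volume_Ioo]
  rw [segLen, hcc, hvol, ENNReal.toReal_ofReal (by linarith)]

/-- Concavity of the chord-length function along convex combinations. -/
lemma segLen_concave (hOpen : IsOpen D) (hBdd : Bornology.IsBounded D) (hConv : Convex ℝ D)
    {p q v : EuclideanSpace ℝ (Fin n)} (hp : p ∈ D) (hq : q ∈ D) (hv : ‖v‖ = 1)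
    {a b : ℝ} (ha : 0 ≤ a) (hb : 0 ≤ b) (hab : a + b = 1) :
    a * segLen D p v + b * segLen D q v ≤ segLen D (a • p + b • q) v := by
  rcases ha.eq_or_lt with rfl | ha'
  · have hb1 : b = 1 := by linarith
    subst hb1
    simp
  rcases hb.eq_or_lt with rfl | hb'
  · have ha1 : a = 1 := by linarith
    subst ha1
    simp
  -- Now 0 < a, 0 < b.
  have hzD : a • p + b • q ∈ D := hConv hp hq ha hb hab
  have h0A : (0 : ℝ) ∈ lineSet D p v := by simp [lineSet, hp]
  have h0B : (0 : ℝ) ∈ lineSet D q v := by simp [lineSet, hq]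
  have h0C : (0 : ℝ) ∈ lineSet D (a • p + b • q) v := by simp [lineSet, hzD]
  have hAe := open_convex_bdd_eq_Ioo (lineSet_isOpen hOpen p v) (lineSet_convex hConv p v)
    (lineSet_bounded hBdd p hv) ⟨0, h0A⟩
  have hBe := open_convex_bdd_eq_Ioo (lineSet_isOpen hOpen q v) (lineSet_convex hConv q v)
    (lineSet_bounded hBdd q hv) ⟨0, h0B⟩
  have hCe := open_convex_bdd_eq_Ioo (lineSet_isOpen hOpen (a • p + b • q) v)
    (lineSet_convex hConv (a • p + b • q) v)
    (lineSet_bounded hBdd (a • p + b • q) hv) ⟨0, h0C⟩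
  set α := sInf (lineSet D p v) with hα
  set α' := sSup (lineSet D p v) with hα'
  set β := sInf (lineSet D q v) with hβ
  set β' := sSup (lineSet D q v) with hβ'
  set γ := sInf (lineSet D (a • p + b • q) v) with hγ
  set γ' := sSup (lineSet D (a • p + b • q) v) with hγ'
  have hAlt : α < α' := by have h := hAe ▸ h0A; exact h.1.trans h.2
  have hBlt : β < β' := by have h := hBe ▸ h0B; exact h.1.trans h.2
  -- membership of combinations
  have hmix : ∀ s ∈ lineSet D p v, ∀ u ∈ lineSet D q v,
      a * s + b * u ∈ lineSet D (a • p + b • q) v := by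
    intro s hs u hu
    have hsD : p + s • v ∈ D := hs
    have huD : q + u • v ∈ D := hu
    have h := hConv hsD huD ha hb hab
    have heq : a • (p + s • v) + b • (q + u • v) = (a • p + b • q) + (a * s + b * u) • v := by
      module
    show (a • p + b • q) + (a * s + b * u) • v ∈ D
    rw [← heq]
    exact h
  -- the interval of convex combinations is inside the combined line set
  have hsub : Set.Ioo (a * α + b * β) (a * α' + b * β') ⊆ lineSet D (a • p + b • q) v := by
    intro t ht
    obtain ⟨ht1, ht2⟩ := ht
    have hUL : 0 < (a * α' + b * β') - (a * α + b * β) := by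
      have h1 := mul_pos ha' (sub_pos.2 hAlt)
      have h2 := mul_pos hb' (sub_pos.2 hBlt)
      nlinarith
    set θ := (t - (a * α + b * β)) / ((a * α' + b * β') - (a * α + b * β)) with hθdef
    have hθ0 : 0 < θ := div_pos (by linarith) hUL
    have hθ1 : θ < 1 := by
      rw [hθdef, div_lt_one hUL]
      linarith
    have hsA : α + θ * (α' - α) ∈ lineSet D p v := by
      rw [hAe]
      constructor
      · have := mul_pos hθ0 (sub_pos.2 hAlt)
        linarith
      · have h1 : θ * (α' - α) < 1 * (α' - α) :=
          mul_lt_mul_of_pos_right hθ1 (sub_pos.2 hAlt)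
        linarith
    have huB : β + θ * (β' - β) ∈ lineSet D q v := by
      rw [hBe]
      constructor
      · have := mul_pos hθ0 (sub_pos.2 hBlt)
        linarith
      · have h1 : θ * (β' - β) < 1 * (β' - β) :=
          mul_lt_mul_of_pos_right hθ1 (sub_pos.2 hBlt)
        linarith
    have hkey : a * (α + θ * (α' - α)) + b * (β + θ * (β' - β)) = t := by
      have hθ : θ * ((a * α' + b * β') - (a * α + b * β)) = t - (a * α + b * β) :=
        div_mul_cancel₀ _ (ne_of_gt hUL)
      nlinarith [hθ]
    have hm := hmix _ hsA _ huB
    rwa [hkey] at hm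
  -- deduce endpoint inequalities
  have hne : a * α + b * β < a * α' + b * β' := by
    have h1 := mul_lt_mul_of_pos_left hAlt ha'
    have h2 := mul_lt_mul_of_pos_left hBlt hb'
    linarith
  have hsub' : Set.Ioo (a * α + b * β) (a * α' + b * β') ⊆ Set.Ioo γ γ' := by
    rw [← hCe]; exact hsub
  have hend := (Set.Ioo_subset_Ioo_iff hne).1 hsub'
  rw [segLen_eq hOpen hBdd hConv hp hv, segLen_eq hOpen hBdd hConv hq hv,
    segLen_eq hOpen hBdd hConv hzD hv]
  obtain ⟨e1, e2⟩ := hend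
  show a * (α' - α) + b * (β' - β) ≤ γ' - γ
  nlinarith

end line

/-- for a bounded convex domain `D ⊂ ℝⁿ` with `R = max r`, the set
`E_r = closure {p ∈ D | r(p) ≥ r}` is convex for every `r ∈ [0, R]`. -/
theorem Eset_convex {n : ℕ} (D : Set (EuclideanSpace ℝ (Fin n)))
    (hOpen : IsOpen D) (hNe : D.Nonempty) (hBdd : Bornology.IsBounded D)
    (hConv : Convex ℝ D) :
    ∀ r ∈ Set.Icc (0 : ℝ) (Rmax D), Convex ℝ (Eset D r) := by
  intro r hr
  have hconvS : Convex ℝ {p | p ∈ D ∧ r ≤ inacc D p} := by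
    intro p hp q hq a b ha hb hab
    refine ⟨hConv hp.1 hq.1 ha hb hab, ?_⟩
    rcases (sphere (0 : EuclideanSpace ℝ (Fin n)) 1).eq_empty_or_nonempty with hsph | hsph
    · have h1 : inacc D (a • p + b • q) = inacc D p := by
        unfold inacc
        rw [hsph, Set.image_empty, Set.image_empty]
      rw [h1]; exact hp.2
    · have hbdd : ∀ x : EuclideanSpace ℝ (Fin n),
          BddBelow (segLen D x '' sphere (0 : EuclideanSpace ℝ (Fin n)) 1) := by
        intro x
        refine ⟨0, ?_⟩
        rintro y ⟨v, -, rfl⟩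
        exact ENNReal.toReal_nonneg
      refine le_csInf (hsph.image _) ?_
      rintro y ⟨v, hv, rfl⟩
      have hv1 : ‖v‖ = 1 := by simpa using hv
      have h1 : r ≤ segLen D p v :=
        hp.2.trans (csInf_le (hbdd p) ⟨v, hv, rfl⟩)
      have h2 : r ≤ segLen D q v :=
        hq.2.trans (csInf_le (hbdd q) ⟨v, hv, rfl⟩)
      have h3 := segLen_concave hOpen hBdd hConv hp.1 hq.1 hv1 ha hb hab
      have hr1 : a * r + b * r = r := by rw [← add_mul, hab, one_mul]
      have hr2 : a * r ≤ a * segLen D p v := mul_le_mul_of_nonneg_left h1 ha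
      have hr3 : b * r ≤ b * segLen D q v := mul_le_mul_of_nonneg_left h2 hb
      linarith
  exact hconvS.closure
end

section
/- Let D ⊂ ℝⁿ be a bounded convex domain with R = max_{p ∈ D} r(p). For every r ∈ (0, R), the level set {p ∈ D : r(p) = r} has empty interior. -/
open scoped RealInnerProductSpace
open Metric MeasureTheory

variable {n : ℕ}

lemma aux_slice_convex (D : Set (EuclideanSpace ℝ (Fin n))) (hConv : Convex ℝ D)
    (p v : EuclideanSpace ℝ (Fin n)) : Convex ℝ {t : ℝ | p + t • v ∈ D} := by
  intro t₁ h₁ t₂ h₂ a b ha hb hab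
  have hmem := hConv h₁ h₂ ha hb hab
  have he : a • (p + t₁ • v) + b • (p + t₂ • v) = p + (a • t₁ + b • t₂) • v := by
    match_scalars <;> simp <;> linarith
  rw [he] at hmem
  exact hmem

lemma aux_slice_open (D : Set (EuclideanSpace ℝ (Fin n))) (hOpen : IsOpen D)
    (p v : EuclideanSpace ℝ (Fin n)) : IsOpen {t : ℝ | p + t • v ∈ D} := by
  have : Continuous fun t : ℝ => p + t • v := by fun_prop
  exact hOpen.preimage this

lemma aux_slice_bdd (D : Set (EuclideanSpace ℝ (Fin n))) (hBdd : Bornology.IsBounded D)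
    (p v : EuclideanSpace ℝ (Fin n)) (hv : ‖v‖ = 1) :
    BddAbove {t : ℝ | p + t • v ∈ D} ∧ BddBelow {t : ℝ | p + t • v ∈ D} := by
  obtain ⟨C, hC⟩ := hBdd.subset_closedBall 0
  have key : ∀ t ∈ {t : ℝ | p + t • v ∈ D}, |t| ≤ C + ‖p‖ := by
    intro t ht
    have h1 : ‖p + t • v‖ ≤ C := by
      have := hC ht
      simpa [mem_closedBall, dist_eq_norm] using this
    have h2 : ‖t • v‖ = |t| := by rw [norm_smul, Real.norm_eq_abs, hv, mul_one]
    have h3 : ‖t • v‖ ≤ ‖p + t • v‖ + ‖p‖ := by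
      have he := norm_sub_le (p + t • v) p
      rwa [add_sub_cancel_left] at he
    rw [h2] at h3
    linarith
  constructor
  · exact ⟨C + ‖p‖, fun t ht => (abs_le.mp (key t ht)).2⟩
  · exact ⟨-(C + ‖p‖), fun t ht => (abs_le.mp (key t ht)).1⟩

/-- Representation of segLen for `p ∈ D`. -/
lemma aux_segLen_eq (D : Set (EuclideanSpace ℝ (Fin n))) (hOpen : IsOpen D)
    (hBdd : Bornology.IsBounded D) (hConv : Convex ℝ D)
    {p : EuclideanSpace ℝ (Fin n)} (hp : p ∈ D)
    (v : EuclideanSpace ℝ (Fin n)) (hv : ‖v‖ = 1) :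
    segLen D p v = sSup {t : ℝ | p + t • v ∈ D} - sInf {t : ℝ | p + t • v ∈ D}
    ∧ sInf {t : ℝ | p + t • v ∈ D} < 0 ∧ 0 < sSup {t : ℝ | p + t • v ∈ D} := by
  set S := {t : ℝ | p + t • v ∈ D} with hS
  have h0 : (0 : ℝ) ∈ S := by simp [hS, hp]
  have hcon := aux_slice_convex D hConv p v
  have hop := aux_slice_open D hOpen p v
  obtain ⟨hba, hbb⟩ := aux_slice_bdd D hBdd p v hv
  have hne : S.Nonempty := ⟨0, h0⟩
  have hIoo : S = Set.Ioo (sInf S) (sSup S) := by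
    ext t
    constructor
    · intro ht
      obtain ⟨ε, hε, hball⟩ := Metric.isOpen_iff.mp hop t ht
      have h1 : t + ε / 2 ∈ S := hball (by
        simp only [mem_ball, Real.dist_eq, add_sub_cancel_left]
        rw [abs_of_pos (by linarith)]; linarith)
      have h2 : t - ε / 2 ∈ S := hball (by
        simp only [mem_ball, Real.dist_eq, sub_sub_cancel_left]
        rw [abs_neg, abs_of_pos (by linarith)]; linarith)
      exact ⟨lt_of_le_of_lt (csInf_le hbb h2) (by linarith),
             lt_of_lt_of_le (by linarith) (le_csSup hba h1)⟩
    · rintro ⟨h1, h2⟩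
      obtain ⟨x, hx, hxt⟩ := exists_lt_of_csInf_lt hne h1
      obtain ⟨y, hy, hty⟩ := exists_lt_of_lt_csSup hne h2
      exact hcon.ordConnected.out hx hy ⟨hxt.le, hty.le⟩
  have hlt : sInf S < 0 ∧ 0 < sSup S := by
    have := hIoo ▸ h0; exact ⟨this.1, this.2⟩
  have hcc : connectedComponentIn S 0 = S :=
    hcon.isPreconnected.connectedComponentIn h0
  refine ⟨?_, hlt.1, hlt.2⟩
  have hvol : volume S = ENNReal.ofReal (sSup S - sInf S) := by
    nth_rewrite 1 [hIoo]
    exact Real.volume_Ioo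
  rw [segLen, ← hS, hcc, hvol, ENNReal.toReal_ofReal (by linarith [hlt.1, hlt.2])]

lemma aux_segLen_nonneg (D : Set (EuclideanSpace ℝ (Fin n)))
    (p v : EuclideanSpace ℝ (Fin n)) : 0 ≤ segLen D p v := ENNReal.toReal_nonneg

lemma aux_inacc_bddBelow (D : Set (EuclideanSpace ℝ (Fin n)))
    (p : EuclideanSpace ℝ (Fin n)) :
    BddBelow (segLen D p '' sphere (0 : EuclideanSpace ℝ (Fin n)) 1) :=
  ⟨0, by rintro x ⟨v, _, rfl⟩; exact aux_segLen_nonneg D p v⟩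

/-- Concavity of segLen in p. -/
lemma aux_segLen_concave (D : Set (EuclideanSpace ℝ (Fin n))) (hOpen : IsOpen D)
    (hBdd : Bornology.IsBounded D) (hConv : Convex ℝ D)
    {p₁ p₂ : EuclideanSpace ℝ (Fin n)} (h₁ : p₁ ∈ D) (h₂ : p₂ ∈ D)
    {a b : ℝ} (ha : 0 < a) (hb : 0 < b) (hab : a + b = 1)
    (v : EuclideanSpace ℝ (Fin n)) (hv : ‖v‖ = 1) :
    a * segLen D p₁ v + b * segLen D p₂ v ≤ segLen D (a • p₁ + b • p₂) v := by
  set p := a • p₁ + b • p₂ with hpdef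
  have hpD : p ∈ D := hConv h₁ h₂ ha.le hb.le hab
  set S₁ := {t : ℝ | p₁ + t • v ∈ D} with hS₁
  set S₂ := {t : ℝ | p₂ + t • v ∈ D} with hS₂
  set S := {t : ℝ | p + t • v ∈ D} with hSd
  obtain ⟨e₁, _, _⟩ := aux_segLen_eq D hOpen hBdd hConv h₁ v hv
  obtain ⟨e₂, _, _⟩ := aux_segLen_eq D hOpen hBdd hConv h₂ v hv
  obtain ⟨e, _, _⟩ := aux_segLen_eq D hOpen hBdd hConv hpD v hv
  have hne₁ : S₁.Nonempty := ⟨0, by simp [hS₁, h₁]⟩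
  have hne₂ : S₂.Nonempty := ⟨0, by simp [hS₂, h₂]⟩
  obtain ⟨hba, hbb⟩ := aux_slice_bdd D hBdd p v hv
  have key : ∀ t₁ ∈ S₁, ∀ t₂ ∈ S₂, a * t₁ + b * t₂ ∈ S := by
    intro t₁ ht₁ t₂ ht₂
    have hmem := hConv ht₁ ht₂ ha.le hb.le hab
    have he : a • (p₁ + t₁ • v) + b • (p₂ + t₂ • v) = p + (a * t₁ + b * t₂) • v := by
      rw [hpdef]; match_scalars <;> ring
    rw [he] at hmem
    exact hmem
  -- sup inequality
  have hsup : a * sSup S₁ + b * sSup S₂ ≤ sSup S := by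
    have h1 : ∀ t₂ ∈ S₂, a * sSup S₁ + b * t₂ ≤ sSup S := by
      intro t₂ ht₂
      have hb1 : sSup S₁ ≤ (sSup S - b * t₂) / a := by
        apply csSup_le hne₁
        intro t₁ ht₁
        rw [le_div_iff₀ ha]
        have := le_csSup hba (key t₁ ht₁ t₂ ht₂)
        linarith
      have := (le_div_iff₀ ha).mp hb1
      linarith
    have h2 : sSup S₂ ≤ (sSup S - a * sSup S₁) / b := by
      apply csSup_le hne₂
      intro t₂ ht₂
      rw [le_div_iff₀ hb]
      linarith [h1 t₂ ht₂]
    have := (le_div_iff₀ hb).mp h2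
    linarith
  -- inf inequality
  have hinf : sInf S ≤ a * sInf S₁ + b * sInf S₂ := by
    have h1 : ∀ t₂ ∈ S₂, sInf S ≤ a * sInf S₁ + b * t₂ := by
      intro t₂ ht₂
      have hb1 : (sInf S - b * t₂) / a ≤ sInf S₁ := by
        apply le_csInf hne₁
        intro t₁ ht₁
        rw [div_le_iff₀ ha]
        have := csInf_le hbb (key t₁ ht₁ t₂ ht₂)
        linarith
      have := (div_le_iff₀ ha).mp hb1
      linarith
    have h2 : (sInf S - a * sInf S₁) / b ≤ sInf S₂ := by
      apply le_csInf hne₂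
      intro t₂ ht₂
      rw [div_le_iff₀ hb]
      linarith [h1 t₂ ht₂]
    have := (div_le_iff₀ hb).mp h2
    linarith
  rw [e₁, e₂, e]
  nlinarith [hsup, hinf]

/-- Concavity of inacc. -/
lemma aux_inacc_concave (D : Set (EuclideanSpace ℝ (Fin n))) (hOpen : IsOpen D)
    (hBdd : Bornology.IsBounded D) (hConv : Convex ℝ D)
    {p₁ p₂ : EuclideanSpace ℝ (Fin n)} (h₁ : p₁ ∈ D) (h₂ : p₂ ∈ D)
    {a b : ℝ} (ha : 0 < a) (hb : 0 < b) (hab : a + b = 1)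
    (hsph : (sphere (0 : EuclideanSpace ℝ (Fin n)) 1).Nonempty) :
    a * inacc D p₁ + b * inacc D p₂ ≤ inacc D (a • p₁ + b • p₂) := by
  apply le_csInf (hsph.image _)
  rintro x ⟨v, hv, rfl⟩
  have hv1 : ‖v‖ = 1 := by simpa using hv
  have hseg := aux_segLen_concave D hOpen hBdd hConv h₁ h₂ ha hb hab v hv1
  have i₁ : inacc D p₁ ≤ segLen D p₁ v :=
    csInf_le (aux_inacc_bddBelow D p₁) (Set.mem_image_of_mem _ hv)
  have i₂ : inacc D p₂ ≤ segLen D p₂ v :=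
    csInf_le (aux_inacc_bddBelow D p₂) (Set.mem_image_of_mem _ hv)
  nlinarith

/-- for a bounded convex domain `D ⊂ ℝⁿ` with `R = max r` and any
`r ∈ (0, R)`, the level set `{p ∈ D | r(p) = r}` has empty interior. -/
theorem level_set_empty_interior {n : ℕ} (D : Set (EuclideanSpace ℝ (Fin n)))
    (hOpen : IsOpen D) (hNe : D.Nonempty) (hBdd : Bornology.IsBounded D)
    (hConv : Convex ℝ D) :
    ∀ r ∈ Set.Ioo (0 : ℝ) (Rmax D),
      interior {p | p ∈ D ∧ inacc D p = r} = ∅ := by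
  intro r hr
  by_contra hne
  obtain ⟨p, hp⟩ := Set.nonempty_iff_ne_empty.mpr hne
  obtain ⟨ε, hε, hball⟩ := Metric.isOpen_iff.mp isOpen_interior p hp
  have hball' : ball p ε ⊆ {p | p ∈ D ∧ inacc D p = r} := hball.trans interior_subset
  have hpD : p ∈ D := (hball' (mem_ball_self hε)).1
  have hpr : inacc D p = r := (hball' (mem_ball_self hε)).2
  obtain ⟨q, hqD, hqr⟩ : ∃ q ∈ D, r < inacc D q := by
    by_contra h
    push_neg at h
    have : Rmax D ≤ r := csSup_le (hNe.image _) (by rintro x ⟨y, hy, rfl⟩; exact h y hy)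
    exact absurd hr.2 (not_lt.mpr this)
  have hsph : (sphere (0 : EuclideanSpace ℝ (Fin n)) 1).Nonempty := by
    by_contra h
    rw [Set.not_nonempty_iff_eq_empty] at h
    have : inacc D q = 0 := by rw [inacc, h, Set.image_empty, Real.sInf_empty]
    linarith [hr.1]
  set δ := ε / (2 * (‖p - q‖ + 1)) with hδdef
  have hδpos : 0 < δ := by positivity
  set p' := p + δ • (p - q) with hp'def
  have hp'ball : p' ∈ ball p ε := by
    rw [mem_ball, dist_eq_norm, hp'def, add_sub_cancel_left, norm_smul,
      Real.norm_eq_abs, abs_of_pos hδpos, hδdef]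
    rw [div_mul_eq_mul_div, div_lt_iff₀ (by positivity)]
    nlinarith [norm_nonneg (p - q)]
  have hp'D : p' ∈ D := (hball' hp'ball).1
  have hp'r : inacc D p' = r := (hball' hp'ball).2
  have h1δ : (0:ℝ) < 1 + δ := by linarith
  set a := δ / (1 + δ) with hadef
  set b := 1 / (1 + δ) with hbdef
  have hapos : 0 < a := by positivity
  have hbpos : 0 < b := by positivity
  have hab : a + b = 1 := by rw [hadef, hbdef]; field_simp; ring
  have hcombo : a • q + b • p' = p := by
    rw [hp'def, hadef, hbdef]
    match_scalars <;> field_simp <;> ring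
  have hconc := aux_inacc_concave D hOpen hBdd hConv hqD hp'D hapos hbpos hab hsph
  rw [hcombo, hpr, hp'r] at hconc
  have hr' : a * r + b * r = r := by rw [← add_mul, hab, one_mul]
  have : a * r < a * inacc D q := by nlinarith
  linarith
end
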